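/- arXiv:2411.13171 — 11 statements merged into one kernel-verified Lean document; each statement's English description precedes it below -/
import Mathlib

section
/- Let c ∈ ℝ² and let S be a finite set of points in ℝ² such that dist(c,s) ≤ 2 for every s ∈ S and dist(s,s') > 2 for all distinct s,s' ∈ S. Then |S| ≤ 5. -/
open Real

private def phi2 (p : EuclideanSpace ℝ (Fin 2)) : ℂ := ⟨p 0, p 1⟩

private lemma dist_eq_phi2 (p q : EuclideanSpace ℝ (Fin 2)) :
    dist p q = ‖phi2 p - phi2 q‖ := by
  rw [EuclideanSpace.dist_eq, Complex.norm_def, Complex.normSq_apply]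
  simp [phi2, Fin.sum_univ_two, Real.dist_eq, sq_abs]
  ring_nf

private lemma phi2_inj {p q : EuclideanSpace ℝ (Fin 2)} (h : phi2 p = phi2 q) : p = q := by
  ext i
  fin_cases i
  · exact congrArg Complex.re h
  · exact congrArg Complex.im h

private lemma key_abs {u v : ℂ} (hu : u ≠ 0) (hv : v ≠ 0)
    (hu2 : ‖u‖ ≤ 2) (hv2 : ‖v‖ ≤ 2)
    (hc : 1/2 ≤ Real.cos (u.arg - v.arg)) : ‖u - v‖ ≤ 2 := by
  set r := ‖u‖ with hr
  set s := ‖v‖ with hs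
  have hr0 : 0 ≤ r := norm_nonneg u
  have hs0 : 0 ≤ s := norm_nonneg v
  have hrne : r ≠ 0 := norm_ne_zero_iff.mpr hu
  have hsne : s ≠ 0 := norm_ne_zero_iff.mpr hv
  have hur : u.re = r * Real.cos u.arg := by rw [Complex.cos_arg hu]; field_simp; rfl
  have hui : u.im = r * Real.sin u.arg := by rw [Complex.sin_arg]; field_simp; rfl
  have hvr : v.re = s * Real.cos v.arg := by rw [Complex.cos_arg hv]; field_simp; rfl
  have hvi : v.im = s * Real.sin v.arg := by rw [Complex.sin_arg]; field_simp; rfl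
  have pu := Real.sin_sq_add_cos_sq u.arg
  have pv := Real.sin_sq_add_cos_sq v.arg
  have hsq : (‖u - v‖)^2 = r^2 + s^2 - 2*r*s*Real.cos (u.arg - v.arg) := by
    rw [Complex.sq_norm, Complex.normSq_apply, Complex.sub_re, Complex.sub_im,
      hur, hui, hvr, hvi, Real.cos_sub]
    linear_combination (r^2) * pu + (s^2) * pv
  have habs : 0 ≤ ‖u - v‖ := norm_nonneg _
  nlinarith [mul_nonneg hr0 hs0, mul_nonneg (sub_nonneg.2 hu2) (sub_nonneg.2 hv2),
    mul_nonneg hr0 (sub_nonneg.2 hu2), mul_nonneg hs0 (sub_nonneg.2 hv2),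
    sq_nonneg (‖u - v‖ - 2), sq_nonneg (‖u-v‖+2)]

/-- At most 5 pairwise non-intersecting closed unit disks can all intersect a fixed
closed unit disk (centers of the `S`-disks are within distance 2 of `c`, and pairwise
at distance greater than 2). -/
theorem stmt_1 (c : EuclideanSpace ℝ (Fin 2)) (S : Finset (EuclideanSpace ℝ (Fin 2)))
    (h1 : ∀ s ∈ S, dist c s ≤ 2)
    (h2 : ∀ s ∈ S, ∀ s' ∈ S, s ≠ s' → 2 < dist s s') :
    S.card ≤ 5 := by
  by_contra hcard
  push_neg at hcard
  -- all points differ from c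
  have hne : ∀ s ∈ S, s ≠ c := by
    intro s hs hsc
    -- then any other point is within 2 of c but more than 2 from s = c
    obtain ⟨s', hs', hss'⟩ : ∃ s' ∈ S, s' ≠ s := by
      by_contra hall
      push_neg at hall
      have : S ⊆ {s} := fun x hx => Finset.mem_singleton.2 (hall x hx)
      have := Finset.card_le_card this
      simp at this; omega
    have ha := h2 s hs s' hs' (Ne.symm hss')
    have hbb := h1 s' hs'
    rw [hsc] at ha
    linarith
  set u : EuclideanSpace ℝ (Fin 2) → ℂ := fun s => phi2 s - phi2 c with hu
  have hune : ∀ s ∈ S, u s ≠ 0 := by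
    intro s hs h0
    exact hne s hs (phi2_inj (by rwa [sub_eq_zero] at h0))
  have hule : ∀ s ∈ S, ‖u s‖ ≤ 2 := by
    intro s hs
    have := h1 s hs
    rwa [dist_eq_phi2, norm_sub_rev] at this
  set f : EuclideanSpace ℝ (Fin 2) → ℝ := fun s => (u s).arg with hf
  -- key: no two distinct points have cos of arg difference ≥ 1/2
  have key2 : ∀ s ∈ S, ∀ s' ∈ S, s ≠ s' → ¬ (1/2 ≤ Real.cos (f s - f s')) := by
    intro s hs s' hs' hss' hcos
    have h := key_abs (hune s hs) (hune s' hs') (hule s hs) (hule s' hs') hcos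
    have hd := h2 s hs s' hs' hss'
    rw [dist_eq_phi2] at hd
    have : phi2 s - phi2 s' = u s - u s' := by simp [hu]
    rw [this] at hd
    linarith
  -- f injective on S
  have hinj : Set.InjOn f S := by
    intro s hs s' hs' hfe
    by_contra hss'
    exact key2 s hs s' hs' hss' (by rw [hfe, sub_self, Real.cos_zero]; norm_num)
  have hAcard : 6 ≤ (S.image f).card := by
    rw [Finset.card_image_of_injOn hinj]; omega
  obtain ⟨B, hBsub, hB6⟩ := Finset.exists_subset_card_eq hAcard
  set e := B.orderIsoOfFin hB6 with he
  set b : Fin 6 → ℝ := fun i => (e i : ℝ) with hb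
  have hmono : StrictMono b := fun i j hij => e.strictMono hij
  have hmem : ∀ i : Fin 6, ∃ s ∈ S, f s = b i := by
    intro i
    have : (b i) ∈ S.image f := hBsub (e i).2
    simpa [Finset.mem_image] using this
  choose t ht hft using hmem
  have htne : ∀ i j : Fin 6, i ≠ j → t i ≠ t j := by
    intro i j hij hione
    apply hmono.injective.ne hij
    rw [← hft i, ← hft j, hione]
  -- bounds on b: each b i is an arg
  have hbIoc : ∀ i : Fin 6, -π < b i ∧ b i ≤ π := by
    intro i
    rw [← hft i]
    exact ⟨Complex.neg_pi_lt_arg _, Complex.arg_le_pi _⟩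
  have hpi : (0:ℝ) < π := Real.pi_pos
  -- adjacent contradiction machine
  have adj : ∀ i j : Fin 6, i ≠ j → b i - b j ≤ π/3 → b j - b i ≤ π/3 → False := by
    intro i j hij hij1 hij2
    apply key2 (t i) (ht i) (t j) (ht j) (htne i j hij)
    rw [hft i, hft j]
    have h1 : |b i - b j| ≤ π/3 := abs_le.2 ⟨by linarith, hij1⟩
    calc (1:ℝ)/2 = Real.cos (π/3) := Real.cos_pi_div_three.symm
      _ ≤ Real.cos |b i - b j| := by
          apply Real.cos_le_cos_of_nonneg_of_le_pi (abs_nonneg _) (by linarith) h1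
      _ = Real.cos (b i - b j) := Real.cos_abs _
  -- wrap contradiction
  have hb0 := hbIoc 0
  have hb5 := hbIoc 5
  by_cases g1 : b 1 - b 0 ≤ π/3
  · exact adj 1 0 (by decide) g1 (by have := hmono (show (0:Fin 6) < 1 by decide); linarith)
  by_cases g2 : b 2 - b 1 ≤ π/3
  · exact adj 2 1 (by decide) g2 (by have := hmono (show (1:Fin 6) < 2 by decide); linarith)
  by_cases g3 : b 3 - b 2 ≤ π/3
  · exact adj 3 2 (by decide) g3 (by have := hmono (show (2:Fin 6) < 3 by decide); linarith)
  by_cases g4 : b 4 - b 3 ≤ π/3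
  · exact adj 4 3 (by decide) g4 (by have := hmono (show (3:Fin 6) < 4 by decide); linarith)
  by_cases g5 : b 5 - b 4 ≤ π/3
  · exact adj 5 4 (by decide) g5 (by have := hmono (show (4:Fin 6) < 5 by decide); linarith)
  -- now b 5 - b 0 > 5π/3, so wrap distance < π/3
  push_neg at g1 g2 g3 g4 g5
  have hbig : 5*π/3 < b 5 - b 0 := by linarith
  have hsmall : b 5 - b 0 < 2*π := by linarith [hb0.1, hb5.2]
  apply key2 (t 5) (ht 5) (t 0) (ht 0) (htne 5 0 (by decide))
  rw [hft 5, hft 0]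
  have : Real.cos (b 5 - b 0) = Real.cos (2*π - (b 5 - b 0)) := (Real.cos_two_pi_sub _).symm
  rw [this]
  calc (1:ℝ)/2 = Real.cos (π/3) := Real.cos_pi_div_three.symm
    _ ≤ Real.cos (2*π - (b 5 - b 0)) := by
        apply Real.cos_le_cos_of_nonneg_of_le_pi (by linarith) (by linarith) (by linarith)
end

section
/- Let P be a finite set of points in ℝ², let 0 < α ≤ 1, and suppose some v ∈ P satisfies |{q ∈ P : q ≠ v and dist(v,q) < 2}| > (2/α + 1)² − 1. Then for every function r : P → ℝ with α ≤ r(p) ≤ 1 for all p ∈ P, the open-disk intersection graph G(P,r) has at least one edge. In particular, (P,α,k) is a no-instance of k-Shrinking to Independence for every k. -/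
open scoped Classical

abbrev Pt := EuclideanSpace ℝ (Fin 2)

/-- The open-disk intersection graph of the points of `P` with radius assignment `r`:
distinct points `p, q ∈ P` are adjacent iff `dist p q < r p + r q`. -/
def diskGraph (P : Finset Pt) (r : Pt → ℝ) : SimpleGraph {x : Pt // x ∈ P} where
  Adj p q := p ≠ q ∧ dist (p : Pt) (q : Pt) < r p + r q
  symm := ⟨fun p q h => ⟨h.1.symm, by rw [dist_comm, add_comm]; exact h.2⟩⟩
  loopless := ⟨fun p h => h.1 rfl⟩

open MeasureTheory Metric in
lemma packing_bound (s : Finset Pt) (v : Pt) (ε R : ℝ) (hε : 0 < ε) (hR : 0 < R)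
    (hin : ∀ p ∈ s, dist p v < R)
    (hsep : ∀ p ∈ s, ∀ q ∈ s, p ≠ q → 2 * ε ≤ dist p q) :
    (s.card : ℝ) * ε ^ 2 ≤ (R + ε) ^ 2 := by
  have hdisj : (↑s : Set Pt).PairwiseDisjoint (fun p => ball p ε) := by
    intro p hp q hq hpq
    exact ball_disjoint_ball (by rw [two_mul] at hsep; exact hsep p hp q hq hpq)
  have hsum : ∑ p ∈ s, volume (ball p ε) = volume (⋃ p ∈ s, ball p ε) :=
    (measure_biUnion_finset hdisj (fun p _ => measurableSet_ball)).symm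
  have hsub : (⋃ p ∈ s, ball p ε) ⊆ ball v (R + ε) := by
    intro x hx
    simp only [Set.mem_iUnion] at hx
    obtain ⟨p, hp, hxp⟩ := hx
    have := hin p hp
    calc dist x v ≤ dist x p + dist p v := dist_triangle _ _ _
      _ < ε + R := by have := mem_ball.mp hxp; linarith
      _ = R + ε := by ring
  have hle : ∑ p ∈ s, volume (ball p ε) ≤ volume (ball v (R + ε)) :=
    hsum ▸ measure_mono hsub
  have hcard2 : Fintype.card (Fin 2) = 2 := by simp
  set C : ENNReal := .ofReal (Real.sqrt Real.pi ^ 2) with hC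
  have hvol : ∀ (x : Pt) (ρ : ℝ), volume (ball x ρ) = (ENNReal.ofReal ρ) ^ 2 * C := by
    intro x ρ
    rw [EuclideanSpace.volume_ball, hcard2]
    norm_num [hC]
  rw [hvol] at hle
  simp_rw [hvol] at hle
  rw [Finset.sum_const, nsmul_eq_mul, ← mul_assoc] at hle
  have hCval : C = ENNReal.ofReal Real.pi := by
    rw [hC, Real.sq_sqrt Real.pi_pos.le]
  have hCpos : C ≠ 0 := by
    rw [hCval]; simp [Real.pi_pos]
  have hCfin : C ≠ ⊤ := by rw [hCval]; exact ENNReal.ofReal_ne_top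
  have key : (s.card : ENNReal) * (ENNReal.ofReal ε) ^ 2 ≤ (ENNReal.ofReal (R + ε)) ^ 2 :=
    (ENNReal.mul_le_mul_iff_left hCpos hCfin).mp hle
  have h1 : (ENNReal.ofReal ((s.card : ℝ) * ε ^ 2)) ≤ ENNReal.ofReal ((R + ε) ^ 2) := by
    rw [ENNReal.ofReal_mul (by positivity), ENNReal.ofReal_pow hε.le,
      ENNReal.ofReal_pow (by positivity), ENNReal.ofReal_natCast]
    exact key
  exact (ENNReal.ofReal_le_ofReal_iff (by positivity)).mp h1

/-- If some vertex of the unit disk graph has degree larger than (2/α+1)² - 1,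
then no radius assignment with values in [α,1] makes the open-disk graph edgeless;
in particular, (P,α,k) is a no-instance of k-Shrinking to Independence for every k. -/
theorem stmt_2 (P : Finset Pt) (α : ℝ) (hα₀ : 0 < α) (hα₁ : α ≤ 1)
    (v : Pt) (hv : v ∈ P)
    (hdeg : ((2 / α + 1) ^ 2 - 1 : ℝ) <
      ({q : Pt | q ∈ P ∧ q ≠ v ∧ dist v q < 2}.ncard : ℝ)) :
    (∀ r : Pt → ℝ, (∀ p ∈ P, α ≤ r p ∧ r p ≤ 1) →
      ∃ p q, (diskGraph P r).Adj p q) ∧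
    (∀ k : ℕ, ¬ ∃ S ⊆ P, S.card ≤ k ∧
      ∀ p q, ¬ (diskGraph P (fun x => if x ∈ S then α else 1)).Adj p q) := by
  have main : ∀ r : Pt → ℝ, (∀ p ∈ P, α ≤ r p ∧ r p ≤ 1) →
      ∃ p q, (diskGraph P r).Adj p q := by
    intro r hr
    by_contra hno
    push_neg at hno
    -- the filtered finset
    set T : Finset Pt := P.filter (fun q => q ≠ v ∧ dist v q < 2) with hT
    have hset : {q : Pt | q ∈ P ∧ q ≠ v ∧ dist v q < 2} = ↑T := by
      ext q; simp [hT, and_assoc]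
    rw [hset, Set.ncard_coe_finset] at hdeg
    set s : Finset Pt := insert v T with hs
    have hvT : v ∉ T := by simp [hT]
    have hscard : s.card = T.card + 1 := Finset.card_insert_of_notMem hvT
    have hsP : ∀ p ∈ s, p ∈ P := by
      intro p hp
      rcases Finset.mem_insert.mp hp with h | h
      · exact h ▸ hv
      · exact (Finset.mem_filter.mp h).1
    have hsep : ∀ p ∈ s, ∀ q ∈ s, p ≠ q → 2 * α ≤ dist p q := by
      intro p hp q hq hpq
      have hnadj := hno ⟨p, hsP p hp⟩ ⟨q, hsP q hq⟩
      simp only [diskGraph, ne_eq] at hnadj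
      have : ¬ ((⟨p, hsP p hp⟩ : {x : Pt // x ∈ P}) ≠ ⟨q, hsP q hq⟩ ∧
          dist p q < r p + r q) := hnadj
      push_neg at this
      have hd : r p + r q ≤ dist p q := this (by simpa [Subtype.ext_iff] using hpq)
      have h1 := (hr p (hsP p hp)).1
      have h2 := (hr q (hsP q hq)).1
      linarith
    have hin : ∀ p ∈ s, dist p v < 2 := by
      intro p hp
      rcases Finset.mem_insert.mp hp with h | h
      · simp [h]
      · rw [dist_comm]; exact (Finset.mem_filter.mp h).2.2
    have hpack := packing_bound s v α 2 hα₀ (by norm_num) hin hsep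
    rw [hscard] at hpack
    have heq : (2 + α) ^ 2 = (2 / α + 1) ^ 2 * α ^ 2 := by
      field_simp
    have hTcard : ((2 / α + 1) ^ 2 : ℝ) < (T.card : ℝ) + 1 := by linarith
    have : ((2 / α + 1) ^ 2 : ℝ) * α ^ 2 < ((T.card : ℝ) + 1) * α ^ 2 := by
      exact mul_lt_mul_of_pos_right hTcard (by positivity)
    push_cast at hpack
    nlinarith
  refine ⟨main, fun k ⟨S, hSP, _, hnadj⟩ => ?_⟩
  obtain ⟨p, q, hadj⟩ := main (fun x => if x ∈ S then α else 1) (by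
    intro p _
    by_cases h : p ∈ S <;> simp [h, hα₀.le, hα₁])
  exact hnadj p q hadj
end

section
/- Let P be a finite set of points in ℝ², let 0 < α ≤ 1, and suppose some v ∈ P satisfies |{q ∈ P : q ≠ v and dist(v,q) < 2}| > 6(2/α + 1)² − 1. Then for every function r : P → ℝ with α ≤ r(p) ≤ 1 for all p ∈ P, the open-disk intersection graph G(P,r) contains a cycle (it is not acyclic). In particular, (P,α,k) is a no-instance of k-Shrinking to Acyclicity for every k. -/
open scoped Classical

theorem tri_not_acyclic {V : Type*} {G : SimpleGraph V} {a b c : V}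
    (hab : G.Adj a b) (hbc : G.Adj b c) (hca : G.Adj c a) : ¬ G.IsAcyclic := by
  intro h
  have hcyc : (SimpleGraph.Walk.cons hab (SimpleGraph.Walk.cons hbc
      (SimpleGraph.Walk.cons hca SimpleGraph.Walk.nil))).IsCycle := by
    rw [SimpleGraph.Walk.isCycle_def]
    refine ⟨⟨by simp [SimpleGraph.Walk.edges, Sym2.eq_iff]; aesop⟩, by simp, ?_⟩
    · simp [SimpleGraph.Walk.support]
      exact ⟨⟨hbc.ne, hab.ne.symm⟩, hca.ne⟩
  exact h _ hcyc

lemma coord_le (x y : Pt) (i : Fin 2) : |x i - y i| ≤ dist x y := by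
  rw [EuclideanSpace.dist_eq]
  have h1 : |x i - y i| ^ 2 ≤ ∑ j, dist (x j) (y j) ^ 2 := by
    have := Finset.single_le_sum (f := fun j => dist (x j) (y j) ^ 2)
      (fun j _ => sq_nonneg _) (Finset.mem_univ i)
    simpa [Real.dist_eq, sq_abs] using this
  calc |x i - y i| = Real.sqrt (|x i - y i| ^ 2) := by
        rw [Real.sqrt_sq_eq_abs, abs_abs]
    _ ≤ _ := Real.sqrt_le_sqrt h1

lemma floor_eq_abs_lt {x y s : ℝ} (hs : 0 < s) (h : ⌊x / s⌋ = ⌊y / s⌋) : |x - y| < s := by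
  have h1 := Int.floor_le (x / s); have h2 := Int.lt_floor_add_one (x / s)
  have h3 := Int.floor_le (y / s); have h4 := Int.lt_floor_add_one (y / s)
  rw [h] at h1 h2
  rw [abs_lt]
  constructor
  · have : (y - x) / s < 1 := by rw [sub_div]; linarith
    have := (div_lt_one hs).mp this; linarith
  · have : (x - y) / s < 1 := by rw [sub_div]; linarith
    exact (div_lt_one hs).mp this

/-- If some vertex of the unit disk graph has degree larger than 6(2/α+1)² - 1,
then no radius assignment with values in [α,1] makes the open-disk graph acyclic;
in particular, (P,α,k) is a no-instance of k-Shrinking to Acyclicity for every k. -/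
theorem stmt_3 (P : Finset Pt) (α : ℝ) (hα₀ : 0 < α) (hα₁ : α ≤ 1)
    (v : Pt) (hv : v ∈ P)
    (hdeg : (6 * (2 / α + 1) ^ 2 - 1 : ℝ) <
      ({q : Pt | q ∈ P ∧ q ≠ v ∧ dist v q < 2}.ncard : ℝ)) :
    (∀ r : Pt → ℝ, (∀ p ∈ P, α ≤ r p ∧ r p ≤ 1) →
      ¬ (diskGraph P r).IsAcyclic) ∧
    (∀ k : ℕ, ¬ ∃ S ⊆ P, S.card ≤ k ∧
      (diskGraph P (fun x => if x ∈ S then α else 1)).IsAcyclic) := by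
  have key : ∀ r : Pt → ℝ, (∀ p ∈ P, α ≤ r p ∧ r p ≤ 1) →
      ¬ (diskGraph P r).IsAcyclic := by
    intro r hr
    set s : ℝ := 7 * α / 5 with hsdef
    have hs0 : 0 < s := by positivity
    set S : Finset Pt := P.filter (fun q => q ≠ v ∧ dist v q < 2) with hSdef
    have hset : {q : Pt | q ∈ P ∧ q ≠ v ∧ dist v q < 2} = ↑S := by
      ext q; simp [hSdef]
    rw [hset, Set.ncard_coe_finset] at hdeg
    -- the grid cell map
    set f : Pt → ℤ × ℤ := fun q => (⌊(q 0 - v 0) / s⌋, ⌊(q 1 - v 1) / s⌋) with hfdef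
    set I : Finset ℤ := Finset.Icc ⌊(-2 : ℝ) / s⌋ ⌊(2 : ℝ) / s⌋ with hIdef
    set T : Finset (ℤ × ℤ) := I ×ˢ I with hTdef
    have hcoord : ∀ q ∈ S, ∀ i : Fin 2, ⌊(q i - v i) / s⌋ ∈ I := by
      intro q hq i
      have hq2 : dist v q < 2 := (Finset.mem_filter.mp hq).2.2
      have habs : |q i - v i| ≤ 2 := by
        have := coord_le q v i
        calc |q i - v i| ≤ dist q v := this
          _ = dist v q := dist_comm _ _
          _ ≤ 2 := le_of_lt hq2
      rw [abs_le] at habs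
      rw [hIdef, Finset.mem_Icc]
      constructor
      · exact Int.floor_mono (by gcongr <;> first | exact hs0.le | linarith [habs.1])
      · exact Int.floor_mono (by gcongr <;> first | exact hs0.le | linarith [habs.2])
    have hmaps : ∀ q ∈ S, f q ∈ T := by
      intro q hq
      rw [hTdef, Finset.mem_product]
      exact ⟨hcoord q hq 0, hcoord q hq 1⟩
    -- cardinality bound
    have hIcard : (I.card : ℝ) ≤ 4 / s + 2 := by
      have hneg : (-2 : ℝ) / s = -(2 / s) := by ring
      have hlo : -(2 / s) < ((⌊(-2 : ℝ) / s⌋ : ℤ) : ℝ) + 1 := by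
        rw [← hneg]; exact Int.lt_floor_add_one _
      have hhi' : ((⌊(2 : ℝ) / s⌋ : ℤ) : ℝ) ≤ 2 / s := Int.floor_le _
      have hlo' : ((⌊(-2 : ℝ) / s⌋ : ℤ) : ℝ) ≤ -(2 / s) := by
        rw [← hneg]; exact Int.floor_le _
      have hle : ⌊(-2 : ℝ) / s⌋ ≤ ⌊(2 : ℝ) / s⌋ := by
        have h2s : (0 : ℝ) < 2 / s := by positivity
        exact_mod_cast Int.floor_mono (by linarith : (-2 : ℝ) / s ≤ 2 / s)
      have hcard : (I.card : ℤ) = ⌊(2 : ℝ) / s⌋ + 1 - ⌊(-2 : ℝ) / s⌋ := by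
        rw [hIdef, Int.card_Icc]
        exact Int.toNat_of_nonneg (by omega)
      have hcardR : (I.card : ℝ) =
          ((⌊(2 : ℝ) / s⌋ : ℤ) : ℝ) + 1 - ((⌊(-2 : ℝ) / s⌋ : ℤ) : ℝ) := by
        exact_mod_cast hcard
      rw [hcardR]
      have h4 : (4 : ℝ) / s = 2 / s + 2 / s := by ring
      linarith
    have hIcard0 : (0 : ℝ) ≤ (I.card : ℝ) := Nat.cast_nonneg _
    have hTbound : (T.card : ℝ) * 2 ≤ 6 * (2 / α + 1) ^ 2 - 1 := by
      rw [hTdef, Finset.card_product]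
      push_cast
      have h4s : 4 / s = 20 / (7 * α) := by rw [hsdef]; field_simp; ring
      have hu : (1 : ℝ) ≤ 1 / α := by
        rw [le_div_iff₀ hα₀]; linarith
      have hIc : (I.card : ℝ) ≤ 20 / 7 * (1 / α) + 2 := by
        rw [h4s] at hIcard
        have : (20 : ℝ) / (7 * α) = 20 / 7 * (1 / α) := by ring
        linarith [hIcard, this ▸ hIcard]
      have hKey : ((20 : ℝ) / 7 * (1 / α) + 2) ^ 2 * 2 ≤ 6 * (2 * (1 / α) + 1) ^ 2 - 1 := by
        nlinarith [sq_nonneg (1 / α - 1), sq_nonneg (1 / α), hu]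
      have h2α : (2 : ℝ) / α = 2 * (1 / α) := by ring
      calc (I.card : ℝ) * (I.card : ℝ) * 2 ≤ ((20 : ℝ) / 7 * (1 / α) + 2) ^ 2 * 2 := by
            nlinarith [hIc, hIcard0]
        _ ≤ 6 * (2 * (1 / α) + 1) ^ 2 - 1 := hKey
        _ = 6 * (2 / α + 1) ^ 2 - 1 := by rw [h2α]
    have hnat : T.card * 2 < S.card := by
      have : (T.card * 2 : ℝ) < (S.card : ℝ) := by push_cast; linarith
      exact_mod_cast this
    obtain ⟨y, _, hfib⟩ := Finset.exists_lt_card_fiber_of_mul_lt_card_of_maps_to hmaps hnat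
    obtain ⟨a, ha, b, hb, c, hc, hab, hac, hbc⟩ := Finset.two_lt_card.mp hfib
    -- points in the same cell are pairwise close
    have hclose : ∀ p q : Pt, p ∈ S.filter (fun x => f x = y) → q ∈ S.filter (fun x => f x = y) →
        dist p q < 2 * α := by
      intro p q hp hq
      have hfp := (Finset.mem_filter.mp hp).2
      have hfq := (Finset.mem_filter.mp hq).2
      have h0 : ⌊(p 0 - v 0) / s⌋ = ⌊(q 0 - v 0) / s⌋ := by
        have := hfp.trans hfq.symm
        exact congrArg Prod.fst this
      have h1 : ⌊(p 1 - v 1) / s⌋ = ⌊(q 1 - v 1) / s⌋ := by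
        have := hfp.trans hfq.symm
        exact congrArg Prod.snd this
      have d0 : |(p 0 - v 0) - (q 0 - v 0)| < s := floor_eq_abs_lt hs0 h0
      have d1 : |(p 1 - v 1) - (q 1 - v 1)| < s := floor_eq_abs_lt hs0 h1
      have e0 : |p 0 - q 0| < s := by
        have : (p 0 - v 0) - (q 0 - v 0) = p 0 - q 0 := by ring
        rwa [this] at d0
      have e1 : |p 1 - q 1| < s := by
        have : (p 1 - v 1) - (q 1 - v 1) = p 1 - q 1 := by ring
        rwa [this] at d1
      rw [EuclideanSpace.dist_eq, Fin.sum_univ_two]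
      rw [Real.sqrt_lt' (by positivity)]
      have r0 : dist (p 0) (q 0) = |p 0 - q 0| := Real.dist_eq _ _
      have r1 : dist (p 1) (q 1) = |p 1 - q 1| := Real.dist_eq _ _
      rw [r0, r1]
      have a0 : (0:ℝ) ≤ |p 0 - q 0| := abs_nonneg _
      have a1 : (0:ℝ) ≤ |p 1 - q 1| := abs_nonneg _
      have hs2 : s ^ 2 = 49 * α ^ 2 / 25 := by rw [hsdef]; ring
      nlinarith [sq_nonneg (|p 0 - q 0| - s), sq_nonneg (|p 1 - q 1| - s), e0, e1, a0, a1, hα₀]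
    -- build the triangle
    have hmemP : ∀ p : Pt, p ∈ S.filter (fun x => f x = y) → p ∈ P := by
      intro p hp
      exact Finset.mem_of_mem_filter p (Finset.mem_of_mem_filter p hp)
    have hadj : ∀ (p q : Pt) (hp : p ∈ S.filter (fun x => f x = y))
        (hq : q ∈ S.filter (fun x => f x = y)), p ≠ q →
        (diskGraph P r).Adj ⟨p, hmemP p hp⟩ ⟨q, hmemP q hq⟩ := by
      intro p q hp hq hne
      refine ⟨fun h => hne (congrArg Subtype.val h), ?_⟩
      have := hclose p q hp hq
      have hrp := hr p (hmemP p hp)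
      have hrq := hr q (hmemP q hq)
      calc dist p q < 2 * α := this
        _ ≤ r p + r q := by linarith [hrp.1, hrq.1]
    exact tri_not_acyclic (hadj a b ha hb hab) (hadj b c hb hc hbc)
      (hadj c a hc ha (Ne.symm hac))
  refine ⟨key, ?_⟩
  rintro k ⟨S, hSP, hSk, hac⟩
  refine key (fun x => if x ∈ S then α else 1) (fun p hp => ?_) hac
  by_cases h : p ∈ S <;> simp [h] <;> first | linarith | exact ⟨by linarith, by linarith⟩
end

section
/- Let P be a finite set of points in ℝ² and k ∈ ℕ. Suppose there exist k+1 pairwise disjoint subsets C₁,…,C_{k+1} ⊆ P such that for each i the subgraph of the unit disk graph G(P,𝟏) induced on C_i contains a cycle. Then for every S ⊆ P with |S| ≤ k and every r : P → ℝ with r(p) = 1 for all p ∉ S, the open-disk intersection graph G(P,r) contains a cycle (it is not acyclic). -/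
open scoped Classical

/-- If the unit disk graph on P contains k+1 vertex-disjoint cycles (witnessed by
pairwise disjoint subsets whose induced unit-disk graphs are not acyclic), then
shrinking at most k disks cannot make the open-disk intersection graph acyclic. -/
theorem stmt_6 (P : Finset Pt) (k : ℕ)
    (C : Fin (k + 1) → Finset Pt)
    (hsub : ∀ i, C i ⊆ P)
    (hdisj : ∀ i j, i ≠ j → Disjoint (C i) (C j))
    (hcyc : ∀ i, ¬ (diskGraph (C i) (fun _ => 1)).IsAcyclic)
    (S : Finset Pt) (hS : S ⊆ P) (hcard : S.card ≤ k)
    (r : Pt → ℝ) (hr : ∀ x ∈ P, x ∉ S → r x = 1) :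
    ¬ (diskGraph P r).IsAcyclic := by
  -- pigeonhole: some C i is disjoint from S
  obtain ⟨i, hi⟩ : ∃ i, ∀ x ∈ C i, x ∉ S := by
    by_contra h
    push_neg at h
    choose s hs1 hs2 using h
    have hinj : Function.Injective s := by
      intro a b hab
      by_contra hne
      exact Finset.disjoint_left.mp (hdisj a b hne) (hs1 a) (hab ▸ hs1 b)
    have : k + 1 ≤ S.card := by
      have := Finset.card_le_card_of_injOn s (fun a _ => hs2 a)
        (fun a _ b _ h => hinj h) (s := Finset.univ)
      simpa using this
    omega
  intro hac
  apply hcyc i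
  intro v c hc
  -- map the cycle into diskGraph P r
  let f : {x : Pt // x ∈ C i} → {x : Pt // x ∈ P} := fun x => ⟨x.1, hsub i x.2⟩
  have hfinj : Function.Injective f := by
    intro a b hab
    exact Subtype.ext (show (f a).1 = (f b).1 from congrArg Subtype.val hab)
  have hhom : ∀ {p q}, (diskGraph (C i) (fun _ => 1)).Adj p q →
      (diskGraph P r).Adj (f p) (f q) := by
    intro p q hpq
    refine ⟨fun h => hpq.1 (hfinj h), ?_⟩
    have hp : r p.1 = 1 := hr _ (hsub i p.2) (hi _ p.2)
    have hq : r q.1 = 1 := hr _ (hsub i q.2) (hi _ q.2)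
    have := hpq.2
    show dist (p : Pt) (q : Pt) < r p.1 + r q.1
    rw [hp, hq]
    exact this
  let F : (diskGraph (C i) (fun _ => 1)) →g (diskGraph P r) := ⟨f, hhom⟩
  exact hac (c.map F) (hc.map (f := F) hfinj)
end

section
/- Let P be a finite set of points in ℝ², let 0 ≤ α ≤ 1, and let k ∈ ℕ. Suppose there exist S ⊆ P with |S| ≤ k and r : P → ℝ with r(p) = 1 for all p ∉ S and α ≤ r(p) ≤ 1 for all p ∈ S, such that the open-disk intersection graph G(P,r) is acyclic. Then every p ∈ P satisfies |{q ∈ P : q ≠ p and dist(p,q) < 2}| ≤ 25k + 50, i.e., the maximum degree of the unit disk graph G(P,𝟏) is at most 25k + 50. -/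
open scoped Classical

-- |x - y| < 1 if same floor
lemma abs_sub_lt_one_of_floor_eq {x y : ℝ} (h : ⌊x⌋ = ⌊y⌋) : |x - y| < 1 := by
  have h1 := Int.floor_le x
  have h2 := Int.lt_floor_add_one x
  have h3 := Int.floor_le y
  have h4 := Int.lt_floor_add_one y
  rw [abs_sub_lt_iff]
  constructor <;> linarith [h ▸ h1, h ▸ h2]

lemma dist_lt_two_of_floors {a b : Pt} (h0 : ⌊a 0⌋ = ⌊b 0⌋) (h1 : ⌊a 1⌋ = ⌊b 1⌋) :
    dist a b < 2 := by
  have e0 : |a 0 - b 0| < 1 := abs_sub_lt_one_of_floor_eq h0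
  have e1 : |a 1 - b 1| < 1 := abs_sub_lt_one_of_floor_eq h1
  rw [EuclideanSpace.dist_eq, Fin.sum_univ_two]
  rw [Real.sqrt_lt' (by norm_num)]
  have d0 : dist (a 0) (b 0) ^ 2 < 1 := by
    rw [Real.dist_eq]
    nlinarith [abs_nonneg (a 0 - b 0)]
  have d1 : dist (a 1) (b 1) ^ 2 < 1 := by
    rw [Real.dist_eq]
    nlinarith [abs_nonneg (a 1 - b 1)]
  nlinarith

-- three mutually adjacent vertices contradict acyclicity
lemma no_triangle {V : Type*} {G : SimpleGraph V} (hacyc : G.IsAcyclic)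
    {a b c : V} (hab : G.Adj a b) (hbc : G.Adj b c) (hac : G.Adj a c) : False := by
  rw [SimpleGraph.isAcyclic_iff_path_unique] at hacyc
  have hpath : (SimpleGraph.Walk.cons hac (SimpleGraph.Walk.cons hbc.symm SimpleGraph.Walk.nil)).IsPath := by
    simp [SimpleGraph.Walk.isPath_def, SimpleGraph.Walk.support]
    refine ⟨⟨hac.ne, hab.ne⟩, hbc.ne.symm⟩
  have heq := hacyc (SimpleGraph.Path.singleton hab) ⟨_, hpath⟩
  have hlen := congrArg (fun (w : G.Path a b) => w.1.length) heq
  simp [SimpleGraph.Path.singleton] at hlen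


/-- If (P,α,k) is a yes-instance of (Min) k-Shrinking to Acyclicity, then the maximum
degree of the unit disk graph G(P,𝟏) is at most 25k + 50. -/
theorem stmt_7 (P : Finset Pt) (α : ℝ) (hα₀ : 0 ≤ α) (hα₁ : α ≤ 1) (k : ℕ)
    (S : Finset Pt) (hS : S ⊆ P) (hcard : S.card ≤ k)
    (r : Pt → ℝ) (hr1 : ∀ p ∈ P, p ∉ S → r p = 1) (hr2 : ∀ p ∈ S, α ≤ r p ∧ r p ≤ 1)
    (hacyc : (diskGraph P r).IsAcyclic) :
    ∀ p ∈ P, ({q : Pt | q ∈ P ∧ q ≠ p ∧ dist p q < 2}).ncard ≤ 25 * k + 50 := by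
  intro p hp
  set N : Finset Pt := P.filter (fun q => q ≠ p ∧ dist p q < 2) with hN
  have hset : {q : Pt | q ∈ P ∧ q ≠ p ∧ dist p q < 2} = ↑N := by
    ext q; simp [hN]
  rw [hset, Set.ncard_coe_finset]
  -- split
  have hsplit : (N ∩ S).card + (N \ S).card = N.card := Finset.card_inter_add_card_sdiff N S
  have h1 : (N ∩ S).card ≤ k := le_trans (Finset.card_le_card (Finset.inter_subset_right)) hcard
  -- bound N \ S
  set f : Pt → ℤ × ℤ := fun q => (⌊q 0⌋, ⌊q 1⌋) with hf
  -- image bound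
  have himg : Finset.image f (N \ S) ⊆ Finset.Icc (⌊p 0⌋ - 2) (⌊p 0⌋ + 2) ×ˢ Finset.Icc (⌊p 1⌋ - 2) (⌊p 1⌋ + 2) := by
    intro c hc
    simp only [Finset.mem_image] at hc
    obtain ⟨q, hq, rfl⟩ := hc
    have hqN : q ∈ N := (Finset.mem_sdiff.mp hq).1
    have hd : dist p q < 2 := (Finset.mem_filter.mp hqN).2.2
    have key : ∀ i : Fin 2, ⌊q i⌋ ∈ Finset.Icc (⌊p i⌋ - 2) (⌊p i⌋ + 2) := by
      intro i
      have hi : |p i - q i| ≤ dist p q := by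
        rw [EuclideanSpace.dist_eq]
        have : |p i - q i| = Real.sqrt (dist (p i) (q i) ^ 2) := by
          rw [Real.dist_eq, Real.sqrt_sq (abs_nonneg _)]
        rw [this]
        apply Real.sqrt_le_sqrt
        exact Finset.single_le_sum (f := fun j => dist (p j) (q j) ^ 2)
          (fun j _ => sq_nonneg _) (Finset.mem_univ i)
      have h2 : |p i - q i| < 2 := lt_of_le_of_lt hi hd
      rw [abs_sub_lt_iff] at h2
      rw [Finset.mem_Icc]
      constructor
      · have : p i - 2 ≤ q i := by linarith
        calc ⌊p i⌋ - 2 = ⌊p i - (2:ℤ)⌋ := by rw [Int.floor_sub_intCast]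
          _ ≤ ⌊q i⌋ := Int.floor_le_floor (by push_cast; linarith)
      · have : q i ≤ p i + 2 := by linarith
        calc ⌊q i⌋ ≤ ⌊p i + (2:ℤ)⌋ := Int.floor_le_floor (by push_cast; linarith)
          _ = ⌊p i⌋ + 2 := Int.floor_add_intCast _ _
    exact Finset.mem_product.mpr ⟨key 0, key 1⟩
  have himgcard : (Finset.image f (N \ S)).card ≤ 25 := by
    calc (Finset.image f (N \ S)).card ≤ _ := Finset.card_le_card himg
      _ = 25 := by
        rw [Finset.card_product, Int.card_Icc, Int.card_Icc]
        have e0 : ⌊p 0⌋ + 2 + 1 - (⌊p 0⌋ - 2) = 5 := by ring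
        have e1 : ⌊p 1⌋ + 2 + 1 - (⌊p 1⌋ - 2) = 5 := by ring
        rw [e0, e1]; rfl
  -- fiber bound
  have hfiber : ∀ c ∈ Finset.image f (N \ S), ((N \ S).filter (fun q => f q = c)).card ≤ 2 := by
    intro c _
    by_contra hgt
    push_neg at hgt
    obtain ⟨a, ha, b, hb, d, hd, hab, had, hbd⟩ := Finset.two_lt_card.mp hgt
    simp only [Finset.mem_filter, Finset.mem_sdiff] at ha hb hd
    have hdist : ∀ x y : Pt, f x = f y → dist x y < 2 := by
      intro x y hxy
      exact dist_lt_two_of_floors (congrArg Prod.fst hxy) (congrArg Prod.snd hxy)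
    have haP : a ∈ P := (Finset.mem_filter.mp ha.1.1).1
    have hbP : b ∈ P := (Finset.mem_filter.mp hb.1.1).1
    have hdP : d ∈ P := (Finset.mem_filter.mp hd.1.1).1
    have ra : r a = 1 := hr1 a haP ha.1.2
    have rb : r b = 1 := hr1 b hbP hb.1.2
    have rd : r d = 1 := hr1 d hdP hd.1.2
    have adjab : (diskGraph P r).Adj ⟨a, haP⟩ ⟨b, hbP⟩ := by
      refine ⟨by simp [hab], ?_⟩
      show dist a b < r a + r b
      rw [ra, rb]
      linarith [hdist a b (ha.2.trans hb.2.symm)]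
    have adjbd : (diskGraph P r).Adj ⟨b, hbP⟩ ⟨d, hdP⟩ := by
      refine ⟨by simp [hbd], ?_⟩
      show dist b d < r b + r d
      rw [rb, rd]
      linarith [hdist b d (hb.2.trans hd.2.symm)]
    have adjad : (diskGraph P r).Adj ⟨a, haP⟩ ⟨d, hdP⟩ := by
      refine ⟨by simp [had], ?_⟩
      show dist a d < r a + r d
      rw [ra, rd]
      linarith [hdist a d (ha.2.trans hd.2.symm)]
    exact no_triangle hacyc adjab adjbd adjad
  have h2 : (N \ S).card ≤ 50 := by
    calc (N \ S).card ≤ 2 * (Finset.image f (N \ S)).card :=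
        Finset.card_le_mul_card_image (N \ S) 2 hfiber
      _ ≤ 2 * 25 := by omega
      _ = 50 := rfl
  omega
end

section
/- Let P be a finite set of points in ℝ² and let U ⊆ P be a vertex cover of the unit disk graph G(P,𝟏), i.e., for every pair of distinct p,q ∈ P with dist(p,q) < 2, either p ∈ U or q ∈ U. Let T = U ∪ {p ∈ P : there exists q ∈ U with dist(p,q) < 2} (the union of the closed neighborhoods in G(P,𝟏) of the vertices of U). Then |T| ≤ 7|U|. -/
open scoped Classical

open Real Complex in
noncomputable def eIso : ℂ ≃ₗᵢ[ℝ] EuclideanSpace ℝ (Fin 2) :=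
  Complex.isometryOfOrthonormal (EuclideanSpace.basisFun (Fin 2) ℝ)

open Real Complex in
lemma close_of_arg_close {w v : ℂ} (hw : w ≠ 0) (hv : v ≠ 0)
    (hw2 : ‖w‖ < 2) (hv2 : ‖v‖ < 2)
    (h : |w.arg - v.arg| ≤ π / 3) : dist w v < 2 := by
  set a := ‖w‖ with ha
  set b := ‖v‖ with hb
  have ha0 : 0 ≤ a := norm_nonneg w
  have hb0 : 0 ≤ b := norm_nonneg v
  have hane : a ≠ 0 := norm_ne_zero_iff.mpr hw
  have hbne : b ≠ 0 := norm_ne_zero_iff.mpr hv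
  have hwre : w.re = a * Real.cos w.arg := by
    rw [Complex.cos_arg hw, ← ha]; field_simp
  have hwim : w.im = a * Real.sin w.arg := by
    rw [Complex.sin_arg, ← ha]; field_simp
  have hvre : v.re = b * Real.cos v.arg := by
    rw [Complex.cos_arg hv, ← hb]; field_simp
  have hvim : v.im = b * Real.sin v.arg := by
    rw [Complex.sin_arg, ← hb]; field_simp
  have hcos : (1:ℝ)/2 ≤ Real.cos (w.arg - v.arg) := by
    rw [← Real.cos_abs]
    have := Real.cos_le_cos_of_nonneg_of_le_pi (abs_nonneg (w.arg - v.arg))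
      (by linarith [Real.pi_pos] : π / 3 ≤ π) h
    rwa [Real.cos_pi_div_three] at this
  have hre : (w * starRingEnd ℂ v).re = a * b * Real.cos (w.arg - v.arg) := by
    simp only [Complex.mul_re, Complex.conj_re, Complex.conj_im]
    rw [hwre, hwim, hvre, hvim, Real.cos_sub]; ring
  have hnw : Complex.normSq w = a ^ 2 := (Complex.sq_norm w).symm
  have hnv : Complex.normSq v = b ^ 2 := (Complex.sq_norm v).symm
  have key : dist w v ^ 2 < 2 ^ 2 := by
    rw [Complex.dist_eq, Complex.sq_norm, Complex.normSq_sub, hre, hnw, hnv]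
    nlinarith [mul_nonneg ha0 hb0, sq_nonneg (a - b),
      Real.cos_le_one (w.arg - v.arg)]
  exact lt_of_pow_lt_pow_left₀ 2 (by norm_num) key

open Real Complex in
lemma packing (s : Finset ℂ) (h0 : ∀ w ∈ s, w ≠ 0) (h2 : ∀ w ∈ s, ‖w‖ < 2)
    (hsep : ∀ w ∈ s, ∀ v ∈ s, w ≠ v → 2 ≤ dist w v) : s.card ≤ 6 := by
  by_contra hc
  push_neg at hc
  have hπ : (0:ℝ) < π := Real.pi_pos
  set g : ℂ → ℤ := fun w => min ⌊(w.arg + π) * 3 / π⌋ 5 with hg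
  have hx : ∀ w ∈ s, 0 < (w.arg + π) * 3 / π ∧ (w.arg + π) * 3 / π ≤ 6 := by
    intro w hws
    constructor
    · apply div_pos _ hπ
      nlinarith [Complex.neg_pi_lt_arg w]
    · rw [div_le_iff₀ hπ]
      nlinarith [Complex.arg_le_pi w]
  have maps : ∀ w ∈ s, g w ∈ Finset.Icc (0:ℤ) 5 := by
    intro w hws
    obtain ⟨h1, h6⟩ := hx w hws
    simp only [hg, Finset.mem_Icc, le_min_iff, min_le_iff]
    exact ⟨⟨Int.floor_nonneg.2 h1.le, by norm_num⟩, Or.inr le_rfl⟩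
  obtain ⟨w, hws, v, hvs, hne, heq⟩ :=
    Finset.exists_ne_map_eq_of_card_lt_of_maps_to
      (by simp only [Int.card_Icc]; omega : (Finset.Icc (0:ℤ) 5).card < s.card) maps
  set x := (w.arg + π) * 3 / π with hxdef
  set y := (v.arg + π) * 3 / π with hydef
  obtain ⟨hx0, hx6⟩ := hx w hws
  obtain ⟨hy0, hy6⟩ := hx v hvs
  rw [← hxdef] at hx0 hx6
  rw [← hydef] at hy0 hy6
  simp only [hg] at heq
  have hfx6 : ⌊x⌋ ≤ 6 := Int.floor_le_iff.mpr (by push_cast; linarith)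
  have hfy6 : ⌊y⌋ ≤ 6 := Int.floor_le_iff.mpr (by push_cast; linarith)
  have hflx : (⌊x⌋ : ℝ) ≤ x := Int.floor_le x
  have hfly : (⌊y⌋ : ℝ) ≤ y := Int.floor_le y
  have hfux : x < ⌊x⌋ + 1 := Int.lt_floor_add_one x
  have hfuy : y < ⌊y⌋ + 1 := Int.lt_floor_add_one y
  have hxy : |x - y| ≤ 1 := by
    rcases le_or_gt ⌊x⌋ 5 with hx5 | hx5
    · rcases le_or_gt ⌊y⌋ 5 with hy5 | hy5
      · rw [min_eq_left hx5, min_eq_left hy5] at heq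
        have hc : (⌊x⌋ : ℝ) = (⌊y⌋ : ℝ) := by exact_mod_cast heq
        rw [abs_le]; constructor <;> linarith
      · have hy6' : ⌊y⌋ = 6 := by omega
        have h6y : (6:ℝ) ≤ y := by rw [hy6'] at hfly; exact_mod_cast hfly
        rw [min_eq_left hx5, hy6'] at heq
        have : ⌊x⌋ = 5 := by omega
        have h5x : (5:ℝ) ≤ x := by rw [this] at hflx; exact_mod_cast hflx
        rw [abs_le]; constructor <;> linarith
    · have hx6' : ⌊x⌋ = 6 := by omega
      have h6x : (6:ℝ) ≤ x := by rw [hx6'] at hflx; exact_mod_cast hflx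
      rw [hx6'] at heq
      have h5y : 5 ≤ ⌊y⌋ := by
        rcases le_or_gt 5 ⌊y⌋ with h | h
        · exact h
        · rw [min_eq_left h.le] at heq; omega
      have h5y' : (5:ℝ) ≤ y := by
        calc (5:ℝ) ≤ (⌊y⌋:ℝ) := by exact_mod_cast h5y
          _ ≤ y := hfly
      rw [abs_le]; constructor <;> linarith
  have hargs : |w.arg - v.arg| ≤ π / 3 := by
    have hdiff : x - y = (w.arg - v.arg) * 3 / π := by rw [hxdef, hydef]; ring
    rw [hdiff, abs_div, abs_of_pos hπ, div_le_one hπ, abs_mul] at hxy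
    have h3 : |(3:ℝ)| = 3 := by norm_num
    rw [h3] at hxy
    linarith
  exact absurd (close_of_arg_close (h0 w hws) (h0 v hvs) (h2 w hws) (h2 v hvs) hargs)
    (not_lt.2 (hsep w hws v hvs hne))

/-- If U is a vertex cover of the unit disk graph G(P,𝟏) and T is the union of the
closed neighborhoods of the vertices of U, then |T| ≤ 7|U|. -/
theorem stmt_12 (P U T : Finset Pt) (hUP : U ⊆ P)
    (hcover : ∀ p ∈ P, ∀ q ∈ P, p ≠ q → dist p q < 2 → p ∈ U ∨ q ∈ U)
    (hT : ∀ p, p ∈ T ↔ p ∈ U ∨ (p ∈ P ∧ ∃ q ∈ U, dist p q < 2)) :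
    T.card ≤ 7 * U.card := by
  classical
  set f : Pt → ℂ := fun p => eIso.symm p with hf
  have hfd : ∀ p q : Pt, dist (f p) (f q) = dist p q := fun p q =>
    eIso.symm.dist_map p q
  have hfinj : Function.Injective f := eIso.symm.injective
  set s : Pt → Finset Pt := fun u => T.filter (fun p => p ∉ U ∧ dist p u < 2) with hs
  have hmem : ∀ u p, p ∈ s u → p ∈ P ∧ p ∉ U ∧ dist p u < 2 := by
    intro u p hp
    simp only [hs, Finset.mem_filter] at hp
    obtain ⟨hpT, hpU, hpd⟩ := hp
    rcases (hT p).1 hpT with h | h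
    · exact absurd h hpU
    · exact ⟨h.1, hpU, hpd⟩
  have hcard : ∀ u ∈ U, (s u).card ≤ 6 := by
    intro u hu
    have himg : ((s u).image (fun p => f p - f u)).card = (s u).card :=
      Finset.card_image_of_injOn (fun p _ q _ h => hfinj (sub_left_inj.mp h))
    rw [← himg]
    apply packing
    · intro w hw
      obtain ⟨p, hp, rfl⟩ := Finset.mem_image.mp hw
      obtain ⟨hpP, hpU, hpd⟩ := hmem u p hp
      have hpu : p ≠ u := fun h => hpU (h ▸ hu)
      exact sub_ne_zero.mpr (fun h => hpu (hfinj h))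
    · intro w hw
      obtain ⟨p, hp, rfl⟩ := Finset.mem_image.mp hw
      obtain ⟨hpP, hpU, hpd⟩ := hmem u p hp
      rw [← Complex.dist_eq, hfd]
      exact hpd
    · intro w hw v hv hne
      obtain ⟨p, hp, rfl⟩ := Finset.mem_image.mp hw
      obtain ⟨q, hq, rfl⟩ := Finset.mem_image.mp hv
      obtain ⟨hpP, hpU, hpd⟩ := hmem u p hp
      obtain ⟨hqP, hqU, hqd⟩ := hmem u q hq
      have hpq : p ≠ q := fun h => hne (by rw [h])
      have hd : dist (f p - f u) (f q - f u) = dist p q := by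
        rw [Complex.dist_eq, sub_sub_sub_cancel_right, ← Complex.dist_eq, hfd]
      rw [hd]
      by_contra hlt
      push_neg at hlt
      rcases hcover p hpP q hqP hpq hlt with h | h
      · exact hpU h
      · exact hqU h
  have hsub : T ⊆ U ∪ U.biUnion s := by
    intro p hp
    rcases (hT p).1 hp with h | ⟨hpP, q, hq, hd⟩
    · exact Finset.mem_union_left _ h
    · by_cases hpU : p ∈ U
      · exact Finset.mem_union_left _ hpU
      · refine Finset.mem_union_right _ (Finset.mem_biUnion.mpr ⟨q, hq, ?_⟩)
        simp only [hs, Finset.mem_filter]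
        exact ⟨hp, hpU, hd⟩
  calc T.card ≤ (U ∪ U.biUnion s).card := Finset.card_le_card hsub
    _ ≤ U.card + (U.biUnion s).card := Finset.card_union_le _ _
    _ ≤ U.card + ∑ u ∈ U, (s u).card := by
        exact Nat.add_le_add_left (Finset.card_biUnion_le) _
    _ ≤ U.card + ∑ u ∈ U, 6 := Nat.add_le_add_left (Finset.sum_le_sum hcard) _
    _ = 7 * U.card := by rw [Finset.sum_const, smul_eq_mul]; ring
end

section
/- Let P be a finite set of points in ℝ², let 0 ≤ α ≤ 1 and k ∈ ℕ. Let U ⊆ P be a vertex cover of the unit disk graph G(P,𝟏) (every pair of distinct p,q ∈ P with dist(p,q) < 2 has p ∈ U or q ∈ U), and let T = U ∪ {p ∈ P : there exists q ∈ U with dist(p,q) < 2}. Then there exists S ⊆ P with |S| ≤ k such that the open-disk intersection graph G(P, r_S) is edgeless — where r_S(p) = α for p ∈ S and r_S(p) = 1 otherwise — if and only if there exists S' ⊆ T with |S'| ≤ k such that G(T, r_{S'}) is edgeless, with r_{S'} defined analogously on T. -/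
open scoped Classical

/-- Instance equivalence of the partial kernel for k-Shrinking to Independence:
(P,α,k) admits a solution iff the reduced instance (T,α,k) does, where T is the union
of the closed neighborhoods of a vertex cover U of G(P,𝟏). -/
theorem stmt_13 (P : Finset Pt) (α : ℝ) (hα₀ : 0 ≤ α) (hα₁ : α ≤ 1) (k : ℕ)
    (U T : Finset Pt) (hUP : U ⊆ P)
    (hcover : ∀ p ∈ P, ∀ q ∈ P, p ≠ q → dist p q < 2 → p ∈ U ∨ q ∈ U)
    (hT : ∀ p, p ∈ T ↔ p ∈ U ∨ (p ∈ P ∧ ∃ q ∈ U, dist p q < 2)) :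
    (∃ S ⊆ P, S.card ≤ k ∧
        ∀ a b, ¬ (diskGraph P (fun x => if x ∈ S then α else 1)).Adj a b) ↔
    (∃ S' ⊆ T, S'.card ≤ k ∧
        ∀ a b, ¬ (diskGraph T (fun x => if x ∈ S' then α else 1)).Adj a b) := by
  have hTP : T ⊆ P := by
    intro p hp
    rcases (hT p).1 hp with h | h
    · exact hUP h
    · exact h.1
  constructor
  · rintro ⟨S, hSP, hSk, hS⟩
    refine ⟨S ∩ T, Finset.inter_subset_right,
      le_trans (Finset.card_le_card Finset.inter_subset_left) hSk, ?_⟩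
    rintro ⟨a, ha⟩ ⟨b, hb⟩ ⟨hne, hd⟩
    have hne' : a ≠ b := fun h => hne (Subtype.ext h)
    have ra : (if a ∈ S ∩ T then α else 1) = (if a ∈ S then α else 1) := by
      simp [Finset.mem_inter, ha]
    have rb : (if b ∈ S ∩ T then α else 1) = (if b ∈ S then α else 1) := by
      simp [Finset.mem_inter, hb]
    exact hS ⟨a, hTP ha⟩ ⟨b, hTP hb⟩
      ⟨fun h => hne' (congrArg Subtype.val h), by simpa only [ra, rb] using hd⟩
  · rintro ⟨S', hS'T, hS'k, hS'⟩
    refine ⟨S', fun x hx => hTP (hS'T hx), hS'k, ?_⟩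
    rintro ⟨a, ha⟩ ⟨b, hb⟩ ⟨hne, hd⟩
    have hne' : a ≠ b := fun h => hne (Subtype.ext h)
    have h2 : dist a b < 2 := by
      have hd' : dist a b < (if a ∈ S' then α else 1) + (if b ∈ S' then α else 1) := hd
      have h1 : (if a ∈ S' then α else 1) ≤ 1 := by split_ifs <;> [exact hα₁; exact le_refl 1]
      have hb1 : (if b ∈ S' then α else 1) ≤ 1 := by split_ifs <;> [exact hα₁; exact le_refl 1]
      calc dist a b < _ := hd'
        _ ≤ 1 + 1 := add_le_add h1 hb1
        _ = 2 := by norm_num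
    have haT : a ∈ T ∧ b ∈ T := by
      rcases hcover a ha b hb hne' h2 with h | h
      · refine ⟨(hT a).2 (Or.inl h), (hT b).2 ?_⟩
        by_cases hbU : b ∈ U
        · exact Or.inl hbU
        · exact Or.inr ⟨hb, a, h, by rwa [dist_comm]⟩
      · refine ⟨(hT a).2 ?_, (hT b).2 (Or.inl h)⟩
        by_cases haU : a ∈ U
        · exact Or.inl haU
        · exact Or.inr ⟨ha, b, h, h2⟩
    exact hS' ⟨a, haT.1⟩ ⟨b, haT.2⟩ ⟨fun h => hne' (congrArg Subtype.val h), hd⟩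
end

section
/- Let P be a finite set of points in ℝ², let 0 ≤ α ≤ 1, k ∈ ℕ and μ ≥ 0. Let U ⊆ P be a vertex cover of the unit disk graph G(P,𝟏) (every pair of distinct p,q ∈ P with dist(p,q) < 2 has p ∈ U or q ∈ U), and let T = U ∪ {p ∈ P : there exists q ∈ U with dist(p,q) < 2}. Then the following are equivalent: (i) there exist S ⊆ P with |S| ≤ k and r : P → ℝ with r(p) = 1 for p ∉ S and α ≤ r(p) ≤ 1 for p ∈ S, such that the open-disk intersection graph G(P,r) is edgeless and Σ_{p∈S}(1 − r(p)) ≤ μ; (ii) there exist S' ⊆ T and r' : T → ℝ with the analogous properties for T in place of P. -/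
open scoped Classical

/-- Instance equivalence of the partial kernel for Min k-Shrinking to Independence:
(P,α,k,μ) admits a solution iff the reduced instance (T,α,k,μ) does, where T is the
union of the closed neighborhoods of a vertex cover U of G(P,𝟏). -/
theorem stmt_14 (P : Finset Pt) (α : ℝ) (hα₀ : 0 ≤ α) (hα₁ : α ≤ 1) (k : ℕ)
    (μ : ℝ) (hμ : 0 ≤ μ)
    (U T : Finset Pt) (hUP : U ⊆ P)
    (hcover : ∀ p ∈ P, ∀ q ∈ P, p ≠ q → dist p q < 2 → p ∈ U ∨ q ∈ U)
    (hT : ∀ p, p ∈ T ↔ p ∈ U ∨ (p ∈ P ∧ ∃ q ∈ U, dist p q < 2)) :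
    (∃ S ⊆ P, S.card ≤ k ∧ ∃ r : Pt → ℝ,
        (∀ p ∈ P, p ∉ S → r p = 1) ∧ (∀ p ∈ S, α ≤ r p ∧ r p ≤ 1) ∧
        (∀ a b, ¬ (diskGraph P r).Adj a b) ∧ ∑ p ∈ S, (1 - r p) ≤ μ) ↔
    (∃ S' ⊆ T, S'.card ≤ k ∧ ∃ r' : Pt → ℝ,
        (∀ p ∈ T, p ∉ S' → r' p = 1) ∧ (∀ p ∈ S', α ≤ r' p ∧ r' p ≤ 1) ∧
        (∀ a b, ¬ (diskGraph T r').Adj a b) ∧ ∑ p ∈ S', (1 - r' p) ≤ μ) := by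
  have hTP : T ⊆ P := by
    intro p hp
    rcases (hT p).1 hp with h | h
    · exact hUP h
    · exact h.1
  constructor
  · rintro ⟨S, hSP, hSk, r, hr1, hrS, hadj, hsum⟩
    refine ⟨S ∩ T, Finset.inter_subset_right, le_trans (Finset.card_le_card
      Finset.inter_subset_left) hSk, r, ?_, ?_, ?_, ?_⟩
    · intro p hpT hpS
      by_cases hpS' : p ∈ S
      · exact absurd (Finset.mem_inter.2 ⟨hpS', hpT⟩) hpS
      · exact hr1 p (hTP hpT) hpS'
    · intro p hp
      exact hrS p (Finset.mem_inter.1 hp).1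
    · rintro ⟨a, ha⟩ ⟨b, hb⟩ ⟨hne, hlt⟩
      exact hadj ⟨a, hTP ha⟩ ⟨b, hTP hb⟩ ⟨by simpa using (Subtype.coe_ne_coe.2 hne), hlt⟩
    · refine le_trans (Finset.sum_le_sum_of_subset_of_nonneg Finset.inter_subset_left ?_) hsum
      intro p hp _
      linarith [(hrS p hp).2]
  · rintro ⟨S', hST, hSk, r', hr1, hrS, hadj, hsum⟩
    set r : Pt → ℝ := fun p => if p ∈ T then r' p else 1 with hr
    have hrT : ∀ p ∈ T, r p = r' p := fun p hp => by simp [hr, hp]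
    have hrle : ∀ p, r p ≤ 1 := by
      intro p
      by_cases hp : p ∈ T
      · rw [hrT p hp]
        by_cases hpS : p ∈ S'
        · exact (hrS p hpS).2
        · rw [hr1 p hp hpS]
      · simp [hr, hp]
    refine ⟨S', hST.trans hTP, hSk, r, ?_, ?_, ?_, ?_⟩
    · intro p _ hpS
      by_cases hp : p ∈ T
      · rw [hrT p hp]; exact hr1 p hp hpS
      · simp [hr, hp]
    · intro p hp
      rw [hrT p (hST hp)]; exact hrS p hp
    · rintro ⟨a, ha⟩ ⟨b, hb⟩ ⟨hne, hlt⟩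
      have hne' : a ≠ b := fun h => hne (Subtype.ext h)
      have hd2 : dist a b < 2 := lt_of_lt_of_le hlt (by linarith [hrle a, hrle b])
      have haT : a ∈ T ∧ b ∈ T := by
        rcases hcover a ha b hb hne' hd2 with h | h
        · exact ⟨(hT a).2 (Or.inl h), (hT b).2 (Or.inr ⟨hb, a, h, by rwa [dist_comm]⟩)⟩
        · exact ⟨(hT a).2 (Or.inr ⟨ha, b, h, hd2⟩), (hT b).2 (Or.inl h)⟩
      exact hadj ⟨a, haT.1⟩ ⟨b, haT.2⟩ ⟨fun h => hne' (congrArg Subtype.val h),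
        by rwa [← hrT a haT.1, ← hrT b haT.2]⟩
    · refine le_trans (le_of_eq (Finset.sum_congr rfl fun p hp => ?_)) hsum
      rw [hrT p (hST hp)]
end

section
/- Let 0 < α ≤ 1, let v ∈ ℝ², and let U be a finite set of points in ℝ² with dist(u,v) ≤ 2 for every u ∈ U. Then: (1) there exists Y ⊆ U with |Y| ≤ 9 such that for every u ∈ U there is y ∈ Y with dist(u,y) ≤ 2; and (2) there exists Z ⊆ U with |Z| ≤ (2/α + 1)² such that for every u ∈ U there is z ∈ Z with dist(u,z) ≤ 2α. -/
open scoped Classical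

open Metric MeasureTheory
open scoped ENNReal

lemma pack_lemma (α : ℝ) (hα₀ : 0 < α)
    (v : Pt) (U : Finset Pt) (hU : ∀ u ∈ U, dist u v ≤ 2) :
    ∃ Z ⊆ U, (Z.card : ℝ) ≤ (2 / α + 1) ^ 2 ∧ ∀ u ∈ U, ∃ z ∈ Z, dist u z ≤ 2 * α := by
  set S := U.powerset.filter (fun (Z : Finset Pt) => (Z : Set Pt).Pairwise fun a b => 2 * α < dist a b) with hS
  have hSne : S.Nonempty := ⟨∅, by simp [hS]⟩
  obtain ⟨Z, hZS, hmax⟩ := S.exists_max_image (fun Z => Z.card) hSne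
  have hZU : Z ⊆ U := Finset.mem_powerset.1 (Finset.mem_filter.1 hZS).1
  have hsep : (Z : Set Pt).Pairwise fun a b => 2 * α < dist a b :=
    (Finset.mem_filter.1 hZS).2
  refine ⟨Z, hZU, ?_, ?_⟩
  · -- area bound
    have hdisj : (Z : Set Pt).PairwiseDisjoint (fun z => ball z α) := by
      intro a ha b hb hab
      apply ball_disjoint_ball
      have := hsep ha hb hab
      linarith
    have hsum : ∑ z ∈ Z, volume (ball z α) = volume (⋃ z ∈ Z, ball z α) :=
      (measure_biUnion_finset hdisj (fun z _ => measurableSet_ball)).symm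
    have hsub : (⋃ z ∈ Z, ball z α) ⊆ ball v (2 + α) := by
      intro x hx
      simp only [Set.mem_iUnion] at hx
      obtain ⟨z, hz, hxz⟩ := hx
      have h1 : dist x z < α := mem_ball.1 hxz
      have h2 : dist z v ≤ 2 := hU z (hZU hz)
      have := dist_triangle x z v
      exact mem_ball.2 (by linarith)
    set c := volume (ball (0 : Pt) 1) with hc
    have hball : ∀ x : Pt, ∀ r : ℝ, 0 ≤ r →
        volume (ball x r) = ENNReal.ofReal (r ^ 2) * c := by
      intro x r hr
      have := Measure.addHaar_ball (volume : Measure Pt) x hr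
      rwa [finrank_euclideanSpace_fin] at this
    have key : (Z.card : ℝ≥0∞) * (ENNReal.ofReal (α ^ 2) * c)
        ≤ ENNReal.ofReal ((2 + α) ^ 2) * c := by
      calc (Z.card : ℝ≥0∞) * (ENNReal.ofReal (α ^ 2) * c)
          = ∑ z ∈ Z, volume (ball z α) := by
            rw [Finset.sum_congr rfl (fun z _ => hball z α hα₀.le)]
            simp [mul_comm]
        _ = volume (⋃ z ∈ Z, ball z α) := hsum
        _ ≤ volume (ball v (2 + α)) := measure_mono hsub
        _ = ENNReal.ofReal ((2 + α) ^ 2) * c := hball v (2 + α) (by linarith)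
    have hc0 : c ≠ 0 := (measure_ball_pos volume 0 one_pos).ne'
    have hctop : c ≠ ⊤ := measure_ball_lt_top.ne
    rw [← mul_assoc] at key
    have key2 : (Z.card : ℝ≥0∞) * ENNReal.ofReal (α ^ 2) ≤ ENNReal.ofReal ((2 + α) ^ 2) :=
      (ENNReal.mul_le_mul_iff_left hc0 hctop).1 key
    have key3 : (Z.card : ℝ) * α ^ 2 ≤ (2 + α) ^ 2 := by
      have := key2
      rw [← ENNReal.ofReal_natCast, ← ENNReal.ofReal_mul (by positivity)] at this
      exact (ENNReal.ofReal_le_ofReal_iff (by positivity)).1 this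
    have heq : (2 / α + 1) ^ 2 = (2 + α) ^ 2 / α ^ 2 := by
      field_simp
    rw [heq, le_div_iff₀ (by positivity)]
    exact key3
  · -- domination
    intro u hu
    by_contra h
    push_neg at h
    have huZ : u ∉ Z := fun huz => absurd (h u huz) (by simp [dist_self]; linarith)
    have hins : insert u Z ∈ S := by
      rw [hS, Finset.mem_filter, Finset.mem_powerset]
      refine ⟨Finset.insert_subset hu hZU, ?_⟩
      rw [Finset.coe_insert]
      refine @Set.Pairwise.insert_of_symm _ _ _ _ (Std.Symm.mk ?_) hsep ?_
      · intro a b hab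
        rw [dist_comm]; exact hab
      · intro z hz _
        exact lt_of_not_ge fun hle => (h z hz).not_ge hle
    have := hmax _ hins
    rw [Finset.card_insert_of_notMem huZ] at this
    omega

/-- Domination within a closed neighborhood: (1) there are at most 9 points of U
dominating U in the closed unit-disk graph, and (2) at most (2/α+1)² points of U
dominating U after shrinking all disks to radius α. -/
theorem stmt_16 (α : ℝ) (hα₀ : 0 < α) (hα₁ : α ≤ 1)
    (v : Pt) (U : Finset Pt) (hU : ∀ u ∈ U, dist u v ≤ 2) :
    (∃ Y ⊆ U, Y.card ≤ 9 ∧ ∀ u ∈ U, ∃ y ∈ Y, dist u y ≤ 2) ∧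
    (∃ Z ⊆ U, (Z.card : ℝ) ≤ (2 / α + 1) ^ 2 ∧ ∀ u ∈ U, ∃ z ∈ Z, dist u z ≤ 2 * α) := by
  constructor
  · obtain ⟨Y, hYU, hcard, hdom⟩ := pack_lemma 1 one_pos v U hU
    refine ⟨Y, hYU, ?_, fun u hu => ?_⟩
    · norm_num at hcard
      exact hcard
    · obtain ⟨y, hy, hd⟩ := hdom u hu
      exact ⟨y, hy, by linarith⟩
  · exact pack_lemma α hα₀ v U hU
end

section
/- Let P be a finite set of points in ℝ², let 0 < α ≤ 1, and let k ∈ ℕ. For S ⊆ P, define r_S : P → ℝ by r_S(p) = α if p ∈ S and r_S(p) = 1 otherwise, and let G_S be the closed-disk intersection graph of (P, r_S). Suppose G_∅ (the closed unit disk graph, where distinct p,q are adjacent iff dist(p,q) ≤ 2) is connected, and suppose some v ∈ P satisfies |{u ∈ P : u ≠ v and dist(u,v) ≤ 2}| ≥ 9(4/α + 1)² + 9 + k. Then there exists S ⊆ P with |S| ≥ k such that G_S is connected; i.e., (P,α,k) is a yes-instance of k-Shrinking to Connectivity. -/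
open scoped Classical

/-- The closed-disk intersection graph of the points of `P` with radius assignment `r`:
distinct points `p, q ∈ P` are adjacent iff `dist p q ≤ r p + r q`. -/
def closedDiskGraph (P : Finset Pt) (r : Pt → ℝ) : SimpleGraph {x : Pt // x ∈ P} where
  Adj p q := p ≠ q ∧ dist (p : Pt) (q : Pt) ≤ r p + r q
  symm := ⟨fun p q h => ⟨h.1.symm, by rw [dist_comm, add_comm]; exact h.2⟩⟩
  loopless := ⟨fun p h => h.1 rfl⟩

lemma cdg_adj (P : Finset Pt) (r : Pt → ℝ) (a b : {x : Pt // x ∈ P}) :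
    (closedDiskGraph P r).Adj a b ↔ a ≠ b ∧ dist (a : Pt) (b : Pt) ≤ r a + r b := Iff.rfl

lemma dist_le_of_sq (x y : Pt) {c : ℝ} (hc : 0 ≤ c)
    (h : (x 0 - y 0) ^ 2 + (x 1 - y 1) ^ 2 ≤ c ^ 2) : dist x y ≤ c := by
  rw [EuclideanSpace.dist_eq]
  have hs : ∑ i : Fin 2, dist (x i) (y i) ^ 2 = (x 0 - y 0) ^ 2 + (x 1 - y 1) ^ 2 := by
    simp [Fin.sum_univ_two, Real.dist_eq, sq_abs]
  rw [hs]
  calc Real.sqrt ((x 0 - y 0) ^ 2 + (x 1 - y 1) ^ 2) ≤ Real.sqrt (c ^ 2) :=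
        Real.sqrt_le_sqrt h
    _ = c := Real.sqrt_sq hc

lemma abs_coord_le_dist (x y : Pt) (j : Fin 2) : |x j - y j| ≤ dist x y := by
  rw [EuclideanSpace.dist_eq]
  have h1 : |x j - y j| = Real.sqrt (dist (x j) (y j) ^ 2) := by
    rw [Real.sqrt_sq (dist_nonneg), Real.dist_eq]
  rw [h1]
  apply Real.sqrt_le_sqrt
  fin_cases j <;> simp [Fin.sum_univ_two] <;> positivity

lemma floor_div_close {c a b : ℝ} (hc : 0 < c) (h : ⌊a / c⌋ = ⌊b / c⌋) : |a - b| < c := by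
  have h1 := Int.floor_le (a / c)
  have h2 := Int.lt_floor_add_one (a / c)
  have h3 := Int.floor_le (b / c)
  have h4 := Int.lt_floor_add_one (b / c)
  rw [h] at h1 h2
  have key : ∀ u w : ℝ, u / c < w / c + 1 → u - w < c := by
    intro u w huw
    have h' : (u - w) / c < 1 := by rw [sub_div]; linarith
    have := (div_lt_one hc).mp h'
    linarith
  rw [abs_sub_lt_iff]
  exact ⟨key a b (by linarith), key b a (by linarith)⟩

lemma packing_s18 (v : Pt) (X : Finset Pt) (hd : ∀ x ∈ X, dist x v ≤ 4)
    (hp : ∀ x ∈ X, ∀ y ∈ X, x ≠ y → 2 < dist x y) : X.card ≤ 36 := by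
  classical
  set f : Pt → ℤ × ℤ :=
    fun x => (⌊(x 0 - v 0 + 4) / (7/5)⌋, ⌊(x 1 - v 1 + 4) / (7/5)⌋) with hf
  have key : ∀ x ∈ X, ∀ y ∈ X, f x = f y → dist x y ≤ 2 := by
    intro x hx y hy hxy
    have e0 : ⌊(x 0 - v 0 + 4) / (7/5)⌋ = ⌊(y 0 - v 0 + 4) / (7/5)⌋ :=
      congrArg Prod.fst hxy
    have e1 : ⌊(x 1 - v 1 + 4) / (7/5)⌋ = ⌊(y 1 - v 1 + 4) / (7/5)⌋ :=
      congrArg Prod.snd hxy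
    have d0 : |(x 0 - v 0 + 4) - (y 0 - v 0 + 4)| < 7/5 :=
      floor_div_close (by norm_num) e0
    have d1 : |(x 1 - v 1 + 4) - (y 1 - v 1 + 4)| < 7/5 :=
      floor_div_close (by norm_num) e1
    have d0' : |x 0 - y 0| < 7/5 := by
      have : (x 0 - v 0 + 4) - (y 0 - v 0 + 4) = x 0 - y 0 := by ring
      rwa [this] at d0
    have d1' : |x 1 - y 1| < 7/5 := by
      have : (x 1 - v 1 + 4) - (y 1 - v 1 + 4) = x 1 - y 1 := by ring
      rwa [this] at d1
    apply dist_le_of_sq x y (by norm_num)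
    have s0 : (x 0 - y 0) ^ 2 ≤ (7/5) ^ 2 := by
      rw [← sq_abs]; exact pow_le_pow_left₀ (abs_nonneg _) d0'.le 2
    have s1 : (x 1 - y 1) ^ 2 ≤ (7/5) ^ 2 := by
      rw [← sq_abs]; exact pow_le_pow_left₀ (abs_nonneg _) d1'.le 2
    nlinarith
  have hinj : Set.InjOn f X := by
    intro x hx y hy hxy
    by_contra hne
    exact absurd (key x hx y hy hxy) (not_le.mpr (hp x hx y hy hne))
  have hmaps : ∀ x ∈ X, f x ∈ Finset.Icc ((0,0) : ℤ × ℤ) (5,5) := by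
    intro x hx
    have hb : ∀ j : Fin 2, 0 ≤ ⌊(x j - v j + 4) / (7/5)⌋ ∧ ⌊(x j - v j + 4) / (7/5)⌋ ≤ 5 := by
      intro j
      have habs : |x j - v j| ≤ 4 := (abs_coord_le_dist x v j).trans (hd x hx)
      rw [abs_le] at habs
      constructor
      · apply Int.floor_nonneg.mpr
        have : (0:ℝ) ≤ x j - v j + 4 := by linarith [habs.1]
        positivity
      · have : (x j - v j + 4) / (7/5) < 6 := by
          rw [div_lt_iff₀ (by norm_num : (0:ℝ) < 7/5)]
          linarith [habs.2]
        have h6 : ⌊(x j - v j + 4) / (7/5)⌋ < 6 := Int.floor_lt.mpr (by exact_mod_cast this)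
        omega
    exact Finset.mem_Icc.mpr ⟨⟨(hb 0).1, (hb 1).1⟩, ⟨(hb 0).2, (hb 1).2⟩⟩
  have := Finset.card_le_card_of_injOn f hmaps hinj
  have hicc : (Finset.Icc ((0,0) : ℤ × ℤ) (5,5)).card = 36 := by
    rw [Finset.Icc_prod_def, Finset.card_product]
    simp [Int.card_Icc]

  omega

lemma rad_mono {α : ℝ} (hα₁ : α ≤ 1) {S' S : Finset Pt} (h : S' ⊆ S) (p : Pt) :
    (if p ∈ S then α else 1) ≤ (if p ∈ S' then α else 1) := by
  by_cases h1 : p ∈ S'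
  · simp [h1, h h1]
  · simp only [if_neg h1]
    split_ifs with h2
    · exact hα₁
    · exact le_refl 1

lemma G_mono {P : Finset Pt} {α : ℝ} (hα₁ : α ≤ 1) {S' S : Finset Pt} (h : S' ⊆ S) :
    closedDiskGraph P (fun x => if x ∈ S then α else 1) ≤
      closedDiskGraph P (fun x => if x ∈ S' then α else 1) := by
  intro a b hab
  exact ⟨hab.1, hab.2.trans (add_le_add (rad_mono hα₁ h _) (rad_mono hα₁ h _))⟩

lemma walk_boundary {V : Type*} {H : SimpleGraph V} (R : V → Prop) :
    ∀ {a b : V}, H.Walk a b → ¬ R a → R b → ∃ x y, H.Adj x y ∧ ¬ R x ∧ R y := by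
  intro a b p
  induction p with
  | nil => intro h1 h2; exact absurd h2 h1
  | @cons u c w h q ih =>
    intro h1 h2
    by_cases hc : R c
    · exact ⟨u, c, h, h1, hc⟩
    · exact ih hc h2

lemma main_ind (P : Finset Pt) (α : ℝ) (hα₀ : 0 < α) (hα₁ : α ≤ 1) (k : ℕ)
    (v : Pt) (hv : v ∈ P)
    (hconn : (closedDiskGraph P (fun _ => (1:ℝ))).Connected) :
    ∀ (n : ℕ) (S X : Finset Pt), S.card ≤ n →
      S ⊆ P →
      (∀ s ∈ S, s ≠ v ∧ dist s v ≤ 2) →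
      (∀ s ∈ S, ∃ t, t ∈ P ∧ t ∉ S ∧ t ≠ v ∧ dist t v ≤ 2 ∧ dist s t ≤ α) →
      (∀ x ∈ X, x ∈ P ∧ x ∉ S ∧ dist x v ≤ 4) →
      (∀ (x : Pt) (hxP : x ∈ P), x ∈ X →
          (closedDiskGraph P (fun z => if z ∈ S then α else 1)).Reachable ⟨x, hxP⟩ ⟨v, hv⟩) →
      (∀ x ∈ X, ∀ y ∈ X, x ≠ y → 2 < dist x y) →
      k + 36 ≤ S.card + X.card →
      ∃ S' ⊆ P, k ≤ S'.card ∧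
        (closedDiskGraph P (fun z => if z ∈ S' then α else 1)).Connected := by
  have mkadj : ∀ (T : Finset Pt) (x y : {z : Pt // z ∈ P}), (x:Pt) ≠ (y:Pt) →
      (x:Pt) ∉ T → (y:Pt) ∉ T → dist (x:Pt) (y:Pt) ≤ 2 →
      (closedDiskGraph P (fun z => if z ∈ T then α else 1)).Adj x y := by
    intro T x y hne hx hy hd
    refine ⟨fun h => hne (congrArg Subtype.val h), ?_⟩
    show dist (x:Pt) (y:Pt) ≤ (if (x:Pt) ∈ T then α else 1) + (if (y:Pt) ∈ T then α else 1)
    rw [if_neg hx, if_neg hy]; linarith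
  intro n
  induction n with
  | zero =>
    intro S X hn hSP hSD htw hX hXr hXsep hk
    have hS0 : S = ∅ := Finset.card_eq_zero.mp (Nat.le_zero.mp hn)
    refine ⟨∅, Finset.empty_subset _, ?_, ?_⟩
    · have hp := packing_s18 v X (fun x hx => (hX x hx).2.2) hXsep
      rw [hS0, Finset.card_empty] at hk
      simp only [Finset.card_empty]
      omega
    · have hfun : (fun z : Pt => if z ∈ (∅ : Finset Pt) then α else 1) = fun _ => (1:ℝ) := by
        funext z; simp
      rw [hfun]; exact hconn
  | succ n ih =>
    intro S X hn hSP hSD htw hX hXr hXsep hk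
    by_cases hC : (closedDiskGraph P (fun z => if z ∈ S then α else 1)).Connected
    · refine ⟨S, hSP, ?_, hC⟩
      have hp := packing_s18 v X (fun x hx => (hX x hx).2.2) hXsep
      omega
    · have hvS : v ∉ S := fun hvin => (hSD v hvin).1 rfl
      haveI : Nonempty {x : Pt // x ∈ P} := ⟨⟨v, hv⟩⟩
      have hw : ∃ w : {x : Pt // x ∈ P},
          ¬ (closedDiskGraph P (fun z => if z ∈ S then α else 1)).Reachable w ⟨v, hv⟩ := by
        by_contra h'
        push_neg at h'
        exact hC ⟨fun x y => (h' x).trans (h' y).symm⟩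
      obtain ⟨w, hw⟩ := hw
      obtain ⟨p⟩ := hconn.preconnected w ⟨v, hv⟩
      obtain ⟨a, b, hadj, hRa, hRb⟩ :=
        walk_boundary
          (fun z => (closedDiskGraph P (fun z => if z ∈ S then α else 1)).Reachable z ⟨v, hv⟩)
          p hw (SimpleGraph.Reachable.refl _)
      have hab : (a:Pt) ≠ (b:Pt) := fun h => hadj.1 (Subtype.ext h)
      have hdab : dist (a:Pt) (b:Pt) ≤ 2 := by
        have h2 : dist (a:Pt) (b:Pt) ≤ (1:ℝ) + 1 := hadj.2
        linarith
      -- a is not shrunk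
      have haS : (a:Pt) ∉ S := by
        intro haIn
        obtain ⟨t, htP, htS, htv, htd2, htda⟩ := htw _ haIn
        have e1 : (closedDiskGraph P (fun z => if z ∈ S then α else 1)).Adj a ⟨t, htP⟩ := by
          refine ⟨fun h => htS ?_, ?_⟩
          · have h' : (a:Pt) = t := congrArg Subtype.val h
            rw [← h']; exact haIn
          · show dist (a:Pt) t ≤ (if (a:Pt) ∈ S then α else 1) + (if t ∈ S then α else 1)
            rw [if_pos haIn, if_neg htS]; linarith
        have e2 := mkadj S ⟨t, htP⟩ ⟨v, hv⟩ htv htS hvS htd2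
        exact hRa (e1.reachable.trans e2.reachable)
      -- a is outside the closed 2-ball around v
      have hav : 2 < dist (a:Pt) v := by
        by_contra h
        push_neg at h
        have hneav : (a:Pt) ≠ v := by
          intro he
          apply hRa
          have : a = (⟨v, hv⟩ : {z : Pt // z ∈ P}) := Subtype.ext he
          rw [this]
        exact hRa (mkadj S a ⟨v, hv⟩ hneav haS hvS h).reachable
      -- b is shrunk
      have hbS : (b:Pt) ∈ S := by
        by_contra hbS
        exact hRa ((mkadj S a b hab haS hbS hdab).reachable.trans hRb)
      have hav4 : dist (a:Pt) v ≤ 4 := by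
        have := dist_triangle (a:Pt) (b:Pt) v
        have hb2 := (hSD _ hbS).2
        linarith
      -- a is far from all of X
      have hXa : ∀ x' ∈ X, 2 < dist (a:Pt) x' := by
        intro x' hx'
        obtain ⟨hx'P, hx'S, _⟩ := hX x' hx'
        by_contra h
        push_neg at h
        have hnea : (a:Pt) ≠ x' := by
          intro he
          apply hRa
          have : a = (⟨x', hx'P⟩ : {z : Pt // z ∈ P}) := Subtype.ext he
          rw [this]; exact hXr x' hx'P hx'
        exact hRa ((mkadj S a ⟨x', hx'P⟩ hnea haS hx'S h).reachable.trans (hXr x' hx'P hx'))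
      have haX : (a:Pt) ∉ X := by
        intro h
        have := hXa _ h
        rw [dist_self] at this
        linarith
      -- recurse with S.erase b, X ∪ {a}
      have hbNe : (b:Pt) ∉ S.erase (b:Pt) := Finset.notMem_erase _ _
      have hsub : S.erase (b:Pt) ⊆ S := Finset.erase_subset _ _
      have hScard : 1 ≤ S.card := Finset.card_pos.mpr ⟨(b:Pt), hbS⟩
      apply ih (S.erase (b:Pt)) (insert (a:Pt) X)
      · rw [Finset.card_erase_of_mem hbS]; omega
      · exact hsub.trans hSP
      · exact fun s hs => hSD s (hsub hs)
      · intro s hs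
        obtain ⟨t, htP, htS, htv, htd2, htda⟩ := htw s (hsub hs)
        exact ⟨t, htP, fun h => htS (hsub h), htv, htd2, htda⟩
      · intro x hx
        rcases Finset.mem_insert.mp hx with rfl | hxX
        · exact ⟨a.2, fun h => haS (hsub h), hav4⟩
        · obtain ⟨h1, h2, h3⟩ := hX x hxX
          exact ⟨h1, fun h => h2 (hsub h), h3⟩
      · intro x hxP hxmem
        have hmono := G_mono (P := P) hα₁ hsub
        rcases Finset.mem_insert.mp hxmem with rfl | hxX
        · -- x = a : route x – b – v
          simp only [Subtype.coe_eta]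
          have e1 : (closedDiskGraph P (fun z => if z ∈ S.erase (b:Pt) then α else 1)).Adj
              a b :=
            mkadj _ a b hab (fun h => haS (hsub h)) hbNe hdab
          have e2 : (closedDiskGraph P (fun z => if z ∈ S.erase (b:Pt) then α else 1)).Adj
              b ⟨v, hv⟩ :=
            mkadj _ b ⟨v, hv⟩ (hSD _ hbS).1 hbNe (fun h => hvS (hsub h)) (hSD _ hbS).2
          exact e1.reachable.trans e2.reachable
        · exact (hXr x hxP hxX).mono hmono
      · intro x hx y hy hne
        rcases Finset.mem_insert.mp hx with rfl | hxX <;>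
          rcases Finset.mem_insert.mp hy with heq | hyX
        · exact absurd heq.symm hne
        · exact hXa y hyX
        · rw [heq, dist_comm]; exact hXa x hxX
        · exact hXsep x hxX y hyX hne
      · rw [Finset.card_erase_of_mem hbS, Finset.card_insert_of_notMem haX]
        omega

/-- If the closed unit disk graph is connected and some vertex has at least
9(4/α+1)² + 9 + k neighbors, then (P,α,k) is a yes-instance of
k-Shrinking to Connectivity. -/
theorem stmt_18 (P : Finset Pt) (α : ℝ) (hα₀ : 0 < α) (hα₁ : α ≤ 1) (k : ℕ)
    (hconn : (closedDiskGraph P (fun _ => 1)).Connected)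
    (v : Pt) (hv : v ∈ P)
    (hdeg : (9 * (4 / α + 1) ^ 2 + 9 + k : ℝ) ≤
      ({u : Pt | u ∈ P ∧ u ≠ v ∧ dist u v ≤ 2}.ncard : ℝ)) :
    ∃ S ⊆ P, k ≤ S.card ∧
      (closedDiskGraph P (fun x => if x ∈ S then α else 1)).Connected := by
  classical
  have hα : α ≠ 0 := ne_of_gt hα₀
  set D : Finset Pt := P.filter (fun u => u ≠ v ∧ dist u v ≤ 2) with hD
  have hDset : {u : Pt | u ∈ P ∧ u ≠ v ∧ dist u v ≤ 2} = ↑D := by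
    ext u; simp [hD]
  rw [hDset, Set.ncard_coe_finset] at hdeg
  have hDmem : ∀ u ∈ D, u ∈ P ∧ u ≠ v ∧ dist u v ≤ 2 := by
    intro u hu
    have := Finset.mem_filter.mp hu
    exact ⟨this.1, this.2⟩
  -- the grid cells of side α/3
  have hα3 : 0 < α/3 := by linarith
  set c : Pt → ℤ × ℤ :=
    fun u => (⌊(u 0 - v 0 + 2) / (α/3)⌋, ⌊(u 1 - v 1 + 2) / (α/3)⌋) with hc
  have hsame : ∀ u u' : Pt, c u = c u' → dist u u' ≤ α := by
    intro u u' h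
    have e0 : ⌊(u 0 - v 0 + 2) / (α/3)⌋ = ⌊(u' 0 - v 0 + 2) / (α/3)⌋ :=
      congrArg Prod.fst h
    have e1 : ⌊(u 1 - v 1 + 2) / (α/3)⌋ = ⌊(u' 1 - v 1 + 2) / (α/3)⌋ :=
      congrArg Prod.snd h
    have d0 := floor_div_close hα3 e0
    have d1 := floor_div_close hα3 e1
    rw [show (u 0 - v 0 + 2) - (u' 0 - v 0 + 2) = u 0 - u' 0 by ring] at d0
    rw [show (u 1 - v 1 + 2) - (u' 1 - v 1 + 2) = u 1 - u' 1 by ring] at d1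
    apply dist_le_of_sq u u' hα₀.le
    have s0 : (u 0 - u' 0) ^ 2 ≤ (α/3) ^ 2 := by
      rw [← sq_abs]; exact pow_le_pow_left₀ (abs_nonneg _) d0.le 2
    have s1 : (u 1 - u' 1) ^ 2 ≤ (α/3) ^ 2 := by
      rw [← sq_abs]; exact pow_le_pow_left₀ (abs_nonneg _) d1.le 2
    nlinarith
  set m : ℤ := ⌊(12:ℝ)/α⌋ with hm
  have hm0 : 0 ≤ m := Int.floor_nonneg.mpr (by positivity)
  have hrange : ∀ u ∈ D, c u ∈ Finset.Icc ((0,0) : ℤ × ℤ) (m, m) := by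
    intro u hu
    obtain ⟨-, -, hud⟩ := hDmem u hu
    have hb : ∀ j : Fin 2, 0 ≤ ⌊(u j - v j + 2)/(α/3)⌋ ∧ ⌊(u j - v j + 2)/(α/3)⌋ ≤ m := by
      intro j
      have habs : |u j - v j| ≤ 2 := (abs_coord_le_dist u v j).trans hud
      rw [abs_le] at habs
      constructor
      · apply Int.floor_nonneg.mpr
        have h0 : (0:ℝ) ≤ u j - v j + 2 := by linarith [habs.1]
        positivity
      · have hle : (u j - v j + 2) / (α/3) ≤ 12/α := by
          rw [div_le_iff₀ hα3]
          have he : (12:ℝ)/α * (α/3) = 4 := by field_simp; norm_num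
          rw [he]; linarith [habs.2]
        exact Int.floor_le_floor hle
    exact Finset.mem_Icc.mpr ⟨⟨(hb 0).1, (hb 1).1⟩, ⟨(hb 0).2, (hb 1).2⟩⟩
  -- one representative per cell
  set rep : ℤ × ℤ → Pt :=
    fun z => if h : ∃ w, w ∈ D ∧ c w = z then h.choose else v with hrep
  have hrep_mem : ∀ u ∈ D, rep (c u) ∈ D ∧ c (rep (c u)) = c u := by
    intro u hu
    have h : ∃ w, w ∈ D ∧ c w = c u := ⟨u, hu, rfl⟩
    simp only [hrep, dif_pos h]
    exact h.choose_spec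
  set S₀ : Finset Pt := D.filter (fun u => rep (c u) ≠ u) with hS₀
  set K : Finset Pt := D.filter (fun u => ¬ rep (c u) ≠ u) with hK
  have hKfix : ∀ u ∈ K, rep (c u) = u := by
    intro u hu
    have := (Finset.mem_filter.mp hu).2
    simpa using this
  have hKD : K ⊆ D := Finset.filter_subset _ _
  have hKcard : K.card ≤ ((m+1).toNat)^2 := by
    have h1 : K.card ≤ (Finset.Icc ((0,0) : ℤ × ℤ) (m, m)).card := by
      apply Finset.card_le_card_of_injOn c (fun u hu => hrange u (hKD hu))
      intro u hu u' hu' hcc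
      have := hKfix u hu
      have h2 := hKfix u' hu'
      rw [← this, ← h2, hcc]
    have hicc : (Finset.Icc ((0,0) : ℤ × ℤ) (m, m)).card = ((m+1).toNat)^2 := by
      rw [Finset.Icc_prod_def, Finset.card_product]
      simp [Int.card_Icc]
      ring
    omega
  have hsplit : S₀.card + K.card = D.card := by
    rw [hS₀, hK]
    exact Finset.card_filter_add_card_filter_not _
  -- cardinality arithmetic
  have hcard36 : k + 36 ≤ S₀.card := by
    have h1 : (((m+1).toNat : ℕ) : ℝ) = (m:ℝ) + 1 := by
      have ht : ((m+1).toNat : ℤ) = m+1 := Int.toNat_of_nonneg (by omega)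
      calc (((m+1).toNat : ℕ) : ℝ) = (((m+1).toNat : ℤ) : ℝ) := by push_cast; ring
        _ = ((m+1 : ℤ) : ℝ) := by rw [ht]
        _ = (m:ℝ) + 1 := by push_cast; ring
    have h2 : (K.card : ℝ) ≤ ((m:ℝ)+1)^2 := by
      calc (K.card : ℝ) ≤ ((((m+1).toNat)^2 : ℕ) : ℝ) := by exact_mod_cast hKcard
        _ = ((((m+1).toNat : ℕ)) : ℝ)^2 := by push_cast; ring
        _ = ((m:ℝ)+1)^2 := by rw [h1]
    have h3 : (D.card : ℝ) = (S₀.card : ℝ) + (K.card : ℝ) := by exact_mod_cast hsplit.symm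
    have h4 : (4:ℝ) ≤ 4/α := by rw [le_div_iff₀ hα₀]; nlinarith
    have hmR : (m:ℝ) ≤ 12/α := Int.floor_le _
    have hmR0 : (0:ℝ) ≤ (m:ℝ) := by exact_mod_cast hm0
    have h12 : (12:ℝ)/α = 3*(4/α) := by ring
    have h5 : ((m:ℝ)+1)^2 ≤ (12/α+1)^2 := by nlinarith
    have h6 : (12/α+1)^2 = 9*(4/α)^2 + 6*(4/α) + 1 := by rw [h12]; ring
    have h7 : 9*(4/α+1)^2 = 9*(4/α)^2 + 18*(4/α) + 9 := by ring
    have hfin : (k:ℝ) + 36 ≤ (S₀.card : ℝ) := by linarith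
    exact_mod_cast hfin
  -- hypotheses of the induction
  have hS₀D : S₀ ⊆ D := Finset.filter_subset _ _
  have hS₀P : S₀ ⊆ P := fun u hu => (hDmem u (hS₀D hu)).1
  obtain ⟨S', hS'P, hS'c, hS'conn⟩ :=
    main_ind P α hα₀ hα₁ k v hv hconn S₀.card S₀ ∅ le_rfl hS₀P
      (fun s hs => (hDmem s (hS₀D hs)).2)
      (by
        intro s hs
        have hsD := hS₀D hs
        have hsne : rep (c s) ≠ s := by
          have := (Finset.mem_filter.mp hs).2
          simpa using this
        obtain ⟨htD, htc⟩ := hrep_mem s hsD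
        obtain ⟨htP, htv, htd⟩ := hDmem _ htD
        refine ⟨rep (c s), htP, ?_, htv, htd, hsame s _ htc.symm⟩
        intro hmem
        have h2 : rep (c (rep (c s))) ≠ rep (c s) := by
          have := (Finset.mem_filter.mp hmem).2
          simpa using this
        rw [htc] at h2
        exact h2 rfl)
      (by simp)
      (by simp)
      (by simp)
      (by simpa using hcard36)
  exact ⟨S', hS'P, hS'c, hS'conn⟩
end

section
/- Let P be a finite set of points in ℝ², let 0 ≤ α ≤ 1 and k ∈ ℕ, and let H = G(P,𝟏) be the unit disk graph. Let C ⊆ P be the vertex set of a connected component of H in which every vertex has degree exactly 2 in H (an isolated cycle). Suppose S ⊆ P with |S| ≤ k and r : P → ℝ with r(p) = 1 for p ∉ S and α ≤ r(p) ≤ 1 for p ∈ S are such that the open-disk intersection graph G(P,r) is acyclic, and suppose |S ∩ C| ≥ 3. Then there exist S' ⊆ P and r' : P → ℝ with r'(p) = 1 for p ∉ S' and α ≤ r'(p) ≤ 1 for p ∈ S', such that G(P,r') is acyclic, |S' ∩ C| ≤ 2, |S'| ≤ |S| (so |S'| ≤ k), and Σ_{p∈P}(1 − r'(p)) ≤ Σ_{p∈P}(1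 − r(p)). -/
open scoped Classical

private lemma diskGraph_adj (P : Finset Pt) (r : Pt → ℝ) (p q : {x : Pt // x ∈ P}) :
    (diskGraph P r).Adj p q ↔ p ≠ q ∧ dist (p : Pt) (q : Pt) < r p + r q := Iff.rfl

private lemma unitGraph_adj (P : Finset Pt) (p q : {x : Pt // x ∈ P}) :
    (diskGraph P (fun _ => 1)).Adj p q ↔ p ≠ q ∧ dist (p : Pt) (q : Pt) < 2 := by
  rw [diskGraph_adj]
  norm_num

private lemma cycle_two_nbrs {V : Type*} [DecidableEq V] {G : SimpleGraph V} {a : V}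
    {c : G.Walk a a} (hc : c.IsCycle) {x : V} (hx : x ∈ c.support) :
    ∃ b d, b ≠ d ∧ s(x, b) ∈ c.edges ∧ s(x, d) ∈ c.edges := by
  have hrot := hc.rotate hx
  have hmem : ∀ e ∈ (c.rotate x hx).edges, e ∈ c.edges := fun e he =>
    ((c.rotate_edges x hx).mem_iff).mp he
  obtain ⟨w, h, q, hq⟩ := SimpleGraph.Walk.not_nil_iff.mp hrot.not_nil
  have hlen : 3 ≤ (SimpleGraph.Walk.cons h q).length := by
    rw [← hq]; exact (hc.rotate hx).three_le_length
  rw [hq] at hrot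
  simp only [hq] at hmem
  rw [SimpleGraph.Walk.cons_isCycle_iff] at hrot
  have hqrev : ¬ q.reverse.Nil := by
    rw [SimpleGraph.Walk.not_nil_iff_lt_length, SimpleGraph.Walk.length_reverse]
    simp only [SimpleGraph.Walk.length_cons] at hlen
    omega
  obtain ⟨d, h2, q2, hq2⟩ := SimpleGraph.Walk.not_nil_iff.mp hqrev
  have hxd : s(x, d) ∈ q.edges := by
    have hmem2 : s(x, d) ∈ q.reverse.edges := by
      rw [hq2]; simp
    rwa [SimpleGraph.Walk.edges_reverse, List.mem_reverse] at hmem2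
  refine ⟨w, d, ?_, hmem _ ?_, hmem _ ?_⟩
  · rintro rfl; exact hrot.2 hxd
  · simp
  · simp only [SimpleGraph.Walk.edges_cons, List.mem_cons]
    exact Or.inr hxd

/-- If a solution of (Min) k-Shrinking to Acyclicity shrinks at least 3 disks of an
isolated cycle C (a connected component of G(P,𝟏) all of whose vertices have degree
exactly 2), then there is another solution shrinking at most 2 disks of C, of no
greater size and no greater cost. -/
theorem stmt_19 (P : Finset Pt) (α : ℝ) (hα₀ : 0 ≤ α) (hα₁ : α ≤ 1) (k : ℕ)
    (C : Finset Pt) (hCP : C ⊆ P)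
    (hcomp : ∃ v : {x : Pt // x ∈ P}, ↑v ∈ C ∧
      ∀ q : {x : Pt // x ∈ P},
        (↑q ∈ C ↔ (diskGraph P (fun _ => 1)).Reachable q v))
    (hdeg2 : ∀ p ∈ C, ({q : Pt | q ∈ P ∧ q ≠ p ∧ dist p q < 2}).ncard = 2)
    (S : Finset Pt) (hSP : S ⊆ P) (hcard : S.card ≤ k)
    (r : Pt → ℝ) (hr1 : ∀ p ∈ P, p ∉ S → r p = 1) (hr2 : ∀ p ∈ S, α ≤ r p ∧ r p ≤ 1)
    (hacyc : (diskGraph P r).IsAcyclic)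
    (hSC : 3 ≤ (S ∩ C).card) :
    ∃ S' ⊆ P, ∃ r' : Pt → ℝ,
      (∀ p ∈ P, p ∉ S' → r' p = 1) ∧ (∀ p ∈ S', α ≤ r' p ∧ r' p ≤ 1) ∧
      (diskGraph P r').IsAcyclic ∧
      (S' ∩ C).card ≤ 2 ∧ S'.card ≤ S.card ∧
      ∑ p ∈ P, (1 - r' p) ≤ ∑ p ∈ P, (1 - r p) := by
  classical
  obtain ⟨v₀, hv₀C, hcomp⟩ := hcomp
  -- the component C is closed under unit adjacency
  have hCclosed : ∀ p ∈ C, ∀ q ∈ P, q ≠ p → dist p q < 2 → q ∈ C := by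
    intro p hp q hq hne hd
    have hadj : (diskGraph P (fun _ => 1)).Adj ⟨q, hq⟩ ⟨p, hCP hp⟩ := by
      rw [unitGraph_adj]
      constructor
      · intro hh; exact hne (congrArg Subtype.val hh)
      · rw [dist_comm] at hd; exact hd
    exact (hcomp ⟨q, hq⟩).mpr (hadj.reachable.trans ((hcomp ⟨p, hCP hp⟩).mp hp))
  -- vertices of C have exactly two unit neighbors (at the subtype level)
  have hnbr : ∀ x : {x : Pt // x ∈ P}, ↑x ∈ C →
      ({y : {x : Pt // x ∈ P} | (diskGraph P (fun _ => 1)).Adj x y}).ncard = 2 := by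
    intro x hx
    have himg : Subtype.val '' {y : {x : Pt // x ∈ P} | (diskGraph P (fun _ => 1)).Adj x y}
        = {q : Pt | q ∈ P ∧ q ≠ ↑x ∧ dist (↑x : Pt) q < 2} := by
      ext q
      constructor
      · rintro ⟨y, hy, rfl⟩
        rw [Set.mem_setOf_eq, unitGraph_adj] at hy
        refine ⟨y.2, ?_, hy.2⟩
        intro hh; exact hy.1 (Subtype.ext hh.symm)
      · rintro ⟨hqP, hqx, hd⟩
        refine ⟨⟨q, hqP⟩, ?_, rfl⟩
        rw [Set.mem_setOf_eq, unitGraph_adj]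
        constructor
        · intro hh; exact hqx (congrArg Subtype.val hh).symm
        · exact hd
    calc ({y : {x : Pt // x ∈ P} | (diskGraph P (fun _ => 1)).Adj x y}).ncard
        = (Subtype.val '' {y : {x : Pt // x ∈ P} |
            (diskGraph P (fun _ => 1)).Adj x y}).ncard :=
          (Set.ncard_image_of_injective _ Subtype.val_injective).symm
      _ = 2 := by rw [himg]; exact hdeg2 ↑x hx
  -- Step 1: there is a "broken" unit edge inside C
  have hbroken : ∃ p ∈ C, ∃ q ∈ P, q ≠ p ∧ dist p q < 2 ∧ r p + r q ≤ dist p q := by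
    by_contra hno
    push_neg at hno
    -- all unit edges in C survive in G(P,r); build a tree and count
    let H : SimpleGraph {x : Pt // x ∈ C} :=
      { Adj := fun a b => (a : Pt) ≠ b ∧ dist (a : Pt) (b : Pt) < 2,
        symm := ⟨fun a b h => ⟨h.1.symm, by rw [dist_comm]; exact h.2⟩⟩,
        loopless := ⟨fun a h => h.1 rfl⟩ }
    have hHadj_iff : ∀ a b : {x : Pt // x ∈ C},
        H.Adj a b ↔ (a : Pt) ≠ b ∧ dist (a : Pt) (b : Pt) < 2 := fun a b => Iff.rfl
    have hreach : ∀ (x y : {x : Pt // x ∈ P}) (w : (diskGraph P (fun _ => 1)).Walk x y)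
        (hx : ↑x ∈ C) (hy : ↑y ∈ C), H.Reachable ⟨↑x, hx⟩ ⟨↑y, hy⟩ := by
      intro x y w
      induction w with
      | nil => intro hx hy; exact SimpleGraph.Reachable.refl _
      | @cons u v yy h w ih =>
        intro hu hy
        rw [unitGraph_adj] at h
        have hvne : (↑v : Pt) ≠ ↑u := fun hh => h.1 (Subtype.ext hh.symm)
        have hvC : ↑v ∈ C := hCclosed ↑u hu ↑v v.2 hvne h.2
        have hHadj : H.Adj ⟨↑u, hu⟩ ⟨↑v, hvC⟩ := ⟨hvne.symm, h.2⟩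
        exact hHadj.reachable.trans (ih hvC hy)
    haveI : Nonempty {x : Pt // x ∈ C} := ⟨⟨↑v₀, hv₀C⟩⟩
    have hconn : H.Connected := by
      refine ⟨fun a b => ?_⟩
      obtain ⟨w⟩ := ((hcomp ⟨↑a, hCP a.2⟩).mp a.2).trans ((hcomp ⟨↑b, hCP b.2⟩).mp b.2).symm
      exact hreach _ _ w a.2 b.2
    have hHacyc : H.IsAcyclic := by
      intro v c hc
      let f : H →g diskGraph P r :=
        ⟨fun a => ⟨↑a, hCP a.2⟩, by
          intro a b hab
          rw [diskGraph_adj]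
          exact ⟨fun hh => hab.1 (Subtype.mk_eq_mk.mp hh),
            hno ↑a a.2 ↑b (hCP b.2) hab.1.symm hab.2⟩⟩
      have hfinj : Function.Injective f := by
        intro a b hab
        exact Subtype.ext (Subtype.mk_eq_mk.mp hab)
      exact hacyc (c.map f) (hc.map hfinj)
    have htree : H.IsTree := ⟨hconn, hHacyc⟩
    haveI : DecidableRel H.Adj := fun a b => Classical.dec _
    have hdegH : ∀ a : {x : Pt // x ∈ C}, H.degree a = 2 := by
      intro a
      have himg : Subtype.val '' (H.neighborSet a)
          = {q : Pt | q ∈ P ∧ q ≠ ↑a ∧ dist (↑a : Pt) q < 2} := by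
        ext q
        constructor
        · rintro ⟨b, hb, rfl⟩
          exact ⟨hCP b.2, hb.1.symm, hb.2⟩
        · rintro ⟨hqP, hqa, hd⟩
          have hqC : q ∈ C := hCclosed ↑a a.2 q hqP hqa hd
          exact ⟨⟨q, hqC⟩, ⟨hqa.symm, hd⟩, rfl⟩
      have h2 : (H.neighborSet a).ncard = 2 := by
        calc (H.neighborSet a).ncard
            = (Subtype.val '' (H.neighborSet a)).ncard :=
              (Set.ncard_image_of_injective _ Subtype.val_injective).symm
          _ = 2 := by rw [himg]; exact hdeg2 ↑a a.2
      calc H.degree a = Fintype.card (H.neighborSet a) :=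
            (H.card_neighborSet_eq_degree a).symm
        _ = Nat.card (H.neighborSet a) := Nat.card_eq_fintype_card.symm
        _ = (H.neighborSet a).ncard := Nat.card_coe_set_eq _
        _ = 2 := h2
    have hsum := H.sum_degrees_eq_twice_card_edges
    rw [Finset.sum_congr rfl (fun a _ => hdegH a)] at hsum
    simp only [Finset.sum_const, Finset.card_univ, smul_eq_mul] at hsum
    have hcardE := htree.card_edgeFinset
    have hpos : 0 < Fintype.card {x : Pt // x ∈ C} := Fintype.card_pos_iff.mpr ⟨⟨↑v₀, hv₀C⟩⟩
    omega
  obtain ⟨p, hpC, q, hqP, hqp, hpq2, hbr⟩ := hbroken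
  have hqC : q ∈ C := hCclosed p hpC q hqP hqp hpq2
  -- Step 2: construction
  set S' : Finset Pt := (S \ C) ∪ ({p, q} : Finset Pt) ∩ S with hS'def
  set r' : Pt → ℝ := fun x => if x ∈ S' then r x else 1 with hr'def
  have hS'S : S' ⊆ S := by
    intro x hx
    rcases Finset.mem_union.mp hx with h | h
    · exact (Finset.mem_sdiff.mp h).1
    · exact (Finset.mem_inter.mp h).2
  have hS'P : S' ⊆ P := hS'S.trans hSP
  have hr'S' : ∀ x ∈ S', r' x = r x := by
    intro x hx; simp only [hr'def, if_pos hx]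
  have hr'nS' : ∀ x ∉ S', r' x = 1 := by
    intro x hx; simp only [hr'def, if_neg hx]
  have hrle1 : ∀ x ∈ P, r x ≤ 1 := by
    intro x hx
    by_cases hxS : x ∈ S
    · exact (hr2 x hxS).2
    · rw [hr1 x hx hxS]
  have hr'le1 : ∀ x ∈ P, r' x ≤ 1 := by
    intro x hx
    by_cases hxS' : x ∈ S'
    · rw [hr'S' x hxS']; exact hrle1 x hx
    · rw [hr'nS' x hxS']
  have hrler' : ∀ x ∈ P, r x ≤ r' x := by
    intro x hx
    by_cases hxS' : x ∈ S'
    · rw [hr'S' x hxS']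
    · rw [hr'nS' x hxS']; exact hrle1 x hx
  have hr'p : r' p = r p := by
    by_cases hpS : p ∈ S
    · exact hr'S' p (Finset.mem_union_right _ (Finset.mem_inter.mpr
        ⟨Finset.mem_insert_self _ _, hpS⟩))
    · rw [hr'nS' p (fun h => hpS (hS'S h)), hr1 p (hCP hpC) hpS]
  have hr'q : r' q = r q := by
    by_cases hqS : q ∈ S
    · exact hr'S' q (Finset.mem_union_right _ (Finset.mem_inter.mpr
        ⟨Finset.mem_insert_of_mem (Finset.mem_singleton_self _), hqS⟩))
    · rw [hr'nS' q (fun h => hqS (hS'S h)), hr1 q hqP hqS]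
  have hr'notC : ∀ x ∈ P, x ∉ C → r' x = r x := by
    intro x hx hxC
    by_cases hxS' : x ∈ S'
    · exact hr'S' x hxS'
    · rw [hr'nS' x hxS']
      by_cases hxS : x ∈ S
      · exact absurd (Finset.mem_union_left _ (Finset.mem_sdiff.mpr ⟨hxS, hxC⟩)) hxS'
      · exact (hr1 x hx hxS).symm
  refine ⟨S', hS'P, r', ?_, ?_, ?_, ?_, ?_, ?_⟩
  · intro x _ hx; exact hr'nS' x hx
  · intro x hx; rw [hr'S' x hx]; exact hr2 x (hS'S hx)
  · -- acyclicity
    have hG'U : ∀ x y : {x : Pt // x ∈ P}, (diskGraph P r').Adj x y →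
        (diskGraph P (fun _ => 1)).Adj x y := by
      intro x y h
      rw [diskGraph_adj] at h
      rw [unitGraph_adj]
      refine ⟨h.1, ?_⟩
      have h1 := hr'le1 ↑x x.2
      have h2 := hr'le1 ↑y y.2
      linarith [h.2]
    intro a c hc
    by_cases haC : ↑a ∈ C
    · -- cycle inside C : contradiction via the broken edge
      have hsupC : ∀ (x y : {x : Pt // x ∈ P}) (w : (diskGraph P r').Walk x y),
          ↑x ∈ C → ∀ z ∈ w.support, ↑z ∈ C := by
        intro x y w
        induction w with
        | nil =>
          intro hx z hz
          rw [SimpleGraph.Walk.support_nil, List.mem_singleton] at hz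
          exact hz ▸ hx
        | @cons u v yy h w ih =>
          intro hu z hz
          have hUadj := hG'U _ _ h
          rw [unitGraph_adj] at hUadj
          have hvC : ↑v ∈ C := hCclosed ↑u hu ↑v v.2
            (fun hh => hUadj.1 (Subtype.ext hh.symm)) hUadj.2
          rw [SimpleGraph.Walk.support_cons, List.mem_cons] at hz
          rcases hz with rfl | hz
          · exact hu
          · exact ih hvC z hz
      have hsup : ∀ z ∈ c.support, ↑z ∈ C := hsupC a a c haC
      have key : ∀ x ∈ c.support, ∀ y : {x : Pt // x ∈ P},
          (diskGraph P (fun _ => 1)).Adj x y → s(x, y) ∈ c.edges := by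
        intro x hx y hy
        obtain ⟨b, d, hbd, heb, hed⟩ := cycle_two_nbrs hc hx
        have hxb := hG'U _ _ (c.adj_of_mem_edges heb)
        have hxd := hG'U _ _ (c.adj_of_mem_edges hed)
        obtain ⟨u, v, huv, hset⟩ := Set.ncard_eq_two.mp (hnbr x (hsup x hx))
        have hb : b ∈ ({u, v} : Set {x : Pt // x ∈ P}) := hset ▸ hxb
        have hd : d ∈ ({u, v} : Set {x : Pt // x ∈ P}) := hset ▸ hxd
        have hyuv : y ∈ ({u, v} : Set {x : Pt // x ∈ P}) := hset ▸ hy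
        have hybd : y = b ∨ y = d := by
          simp only [Set.mem_insert_iff, Set.mem_singleton_iff] at hb hd hyuv
          rcases hb with rfl | rfl <;> rcases hd with rfl | rfl <;>
            rcases hyuv with rfl | rfl <;> tauto
        rcases hybd with rfl | rfl
        · exact heb
        · exact hed
      have hsupclosed : ∀ (x y : {x : Pt // x ∈ P}) (w : (diskGraph P (fun _ => 1)).Walk x y),
          x ∈ c.support → y ∈ c.support := by
        intro x y w
        induction w with
        | nil => exact fun hx => hx
        | @cons u v yy h w ih =>
          intro hu
          exact ih (c.snd_mem_support_of_mem_edges (key u hu v h))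
      have hp' : (⟨p, hCP hpC⟩ : {x : Pt // x ∈ P}) ∈ c.support := by
        obtain ⟨w⟩ := ((hcomp a).mp haC).trans ((hcomp ⟨p, hCP hpC⟩).mp hpC).symm
        exact hsupclosed _ _ w c.start_mem_support
      have hadjpq : (diskGraph P (fun _ => 1)).Adj ⟨p, hCP hpC⟩ ⟨q, hqP⟩ := by
        rw [unitGraph_adj]
        exact ⟨fun hh => hqp (congrArg Subtype.val hh).symm, hpq2⟩
      have hG'pq := c.adj_of_mem_edges (key _ hp' _ hadjpq)
      rw [diskGraph_adj] at hG'pq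
      have hlt : dist p q < r p + r q := by rw [← hr'p, ← hr'q]; exact hG'pq.2
      exact absurd hlt (not_lt.mpr hbr)
    · -- cycle outside C : transfer to G(P,r)
      have hsupN : ∀ (x y : {x : Pt // x ∈ P}) (w : (diskGraph P r').Walk x y),
          ↑x ∉ C → ∀ z ∈ w.support, ↑z ∉ C := by
        intro x y w
        induction w with
        | nil =>
          intro hx z hz
          rw [SimpleGraph.Walk.support_nil, List.mem_singleton] at hz
          exact hz ▸ hx
        | @cons u v yy h w ih =>
          intro hu z hz
          have hUadj := hG'U _ _ h
          rw [unitGraph_adj] at hUadj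
          have hvC : ↑v ∉ C := by
            intro hvC
            exact hu (hCclosed ↑v hvC ↑u u.2
              (fun hh => hUadj.1 (Subtype.ext hh)) (by rw [dist_comm]; exact hUadj.2))
          rw [SimpleGraph.Walk.support_cons, List.mem_cons] at hz
          rcases hz with rfl | hz
          · exact hu
          · exact ih hvC z hz
      have hsup : ∀ z ∈ c.support, ↑z ∉ C := hsupN a a c haC
      have hedges : ∀ e ∈ c.edges, e ∈ (diskGraph P r).edgeSet := by
        intro e he
        induction e with
        | h x y =>
          have hAdj := c.adj_of_mem_edges he
          rw [diskGraph_adj] at hAdj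
          have hx := hsup x (c.fst_mem_support_of_mem_edges he)
          have hy := hsup y (c.snd_mem_support_of_mem_edges he)
          rw [SimpleGraph.mem_edgeSet, diskGraph_adj]
          refine ⟨hAdj.1, ?_⟩
          rw [← hr'notC ↑x x.2 hx, ← hr'notC ↑y y.2 hy]
          exact hAdj.2
      exact hacyc (c.transfer _ hedges) (hc.transfer hedges)
  · -- (S' ∩ C).card ≤ 2
    have hsub : S' ∩ C ⊆ {p, q} := by
      intro x hx
      obtain ⟨hxS', hxC⟩ := Finset.mem_inter.mp hx
      rcases Finset.mem_union.mp hxS' with h | h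
      · exact absurd hxC (Finset.mem_sdiff.mp h).2
      · exact (Finset.mem_inter.mp h).1
    calc (S' ∩ C).card ≤ ({p, q} : Finset Pt).card := Finset.card_le_card hsub
      _ ≤ 2 := Finset.card_insert_le _ _ |>.trans (by simp)
  · -- S'.card ≤ S.card
    have h1 : S'.card ≤ (S \ C).card + 2 := by
      calc S'.card ≤ (S \ C).card + (({p, q} : Finset Pt) ∩ S).card :=
            Finset.card_union_le _ _
        _ ≤ (S \ C).card + 2 := by
            have hle : (({p, q} : Finset Pt) ∩ S).card ≤ ({p, q} : Finset Pt).card :=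
              Finset.card_le_card Finset.inter_subset_left
            have h2 : ({p, q} : Finset Pt).card ≤ 2 :=
              Finset.card_insert_le _ _ |>.trans (by simp)
            omega
    have h2 : (S ∩ C).card + (S \ C).card = S.card := by
      rw [Finset.card_inter_add_card_sdiff]
    omega
  · -- cost
    apply Finset.sum_le_sum
    intro x hx
    have := hrler' x hx
    linarith
end
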